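/- arXiv:2401.07827 — 6 statements merged into one kernel-verified Lean document; each statement's English description precedes it below -/
import Mathlib

section
/- If A is a proper subset of a finite set B, then the density of the free magma M_A inside M_B is zero: lim_{n→∞} |M_A|_{≤n}/|M_B|_{≤n} = 0. -/
open Filter

def FreeMagma.len {α : Type*} : FreeMagma α → ℕ
  | FreeMagma.of _ => 1
  | FreeMagma.mul x y => x.len + y.len

noncomputable def cnt {α : Type*} (X : Set (FreeMagma α)) (n : ℕ) : ℕ :=
  Nat.card {x : FreeMagma α // x ∈ X ∧ x.len = n}

noncomputable def cntLe {α : Type*} (X : Set (FreeMagma α)) (n : ℕ) : ℕ :=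
  Nat.card {x : FreeMagma α // x ∈ X ∧ x.len ≤ n}

namespace FM8

open FreeMagma

@[simp] lemma len_of {α : Type*} (a : α) : (FreeMagma.of a).len = 1 := rfl

@[simp] lemma len_mul {α : Type*} (x y : FreeMagma α) : (x * y).len = x.len + y.len := rfl

lemma one_le_len {α : Type*} (x : FreeMagma α) : 1 ≤ x.len := by
  induction x with
  | ih1 a => simp
  | ih2 x y ihx ihy => simp; omega

@[simp] lemma map_mul'' {α β : Type*} (f : α → β) (x y : FreeMagma α) :
    FreeMagma.map f (x * y) = FreeMagma.map f x * FreeMagma.map f y := map_mul _ _ _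

lemma len_map {α β : Type*} (f : α → β) (x : FreeMagma α) :
    (FreeMagma.map f x).len = x.len := by
  induction x with
  | ih1 a => simp
  | ih2 x y ihx ihy => simp [ihx, ihy]

lemma of_inj' {α : Type*} {a b : α} (h : FreeMagma.of a = FreeMagma.of b) : a = b := by
  injection h

lemma mul_inj' {α : Type*} {a b c d : FreeMagma α} (h : FreeMagma.mul a b = FreeMagma.mul c d) :
    a = c ∧ b = d := by
  injection h with h1 h2; exact ⟨h1, h2⟩

lemma map_injective {α β : Type*} {f : α → β} (hf : Function.Injective f) :
    Function.Injective (FreeMagma.map f) := by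
  intro x
  induction x with
  | ih1 a =>
    intro y h
    cases y with
    | of b => simp only [FreeMagma.map_of] at h; rw [hf (of_inj' h)]
    | mul y z =>
      rw [mul_eq, FreeMagma.map_of, map_mul''] at h
      exact absurd h (by intro hc; cases hc)
  | ih2 x₁ x₂ ih₁ ih₂ =>
    intro y h
    cases y with
    | of b =>
      rw [map_mul'', FreeMagma.map_of] at h
      exact absurd h (by intro hc; cases hc)
    | mul y₁ y₂ =>
      rw [mul_eq, map_mul'', map_mul''] at h
      have h1 : FreeMagma.map f x₁ = FreeMagma.map f y₁ := (mul_inj' h).1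
      have h2 : FreeMagma.map f x₂ = FreeMagma.map f y₂ := (mul_inj' h).2
      rw [ih₁ h1, ih₂ h2, mul_eq]

/-- Polish-notation encoding. -/
def toL {α : Type*} : FreeMagma α → List (Option α)
  | FreeMagma.of a => [some a]
  | FreeMagma.mul x y => none :: (toL x ++ toL y)

@[simp] lemma toL_of {α : Type*} (a : α) : toL (FreeMagma.of a) = [some a] := rfl

@[simp] lemma toL_mul {α : Type*} (x y : FreeMagma α) :
    toL (x * y) = none :: (toL x ++ toL y) := rfl

lemma toL_append_inj {α : Type*} : ∀ (x y : FreeMagma α) (l l' : List (Option α)),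
    toL x ++ l = toL y ++ l' → x = y ∧ l = l'
  | FreeMagma.of a, FreeMagma.of b, l, l', h => by
    simp only [toL, List.cons_append, List.nil_append, List.cons.injEq] at h
    exact ⟨by rw [Option.some.inj h.1], h.2⟩
  | FreeMagma.of a, FreeMagma.mul y₁ y₂, l, l', h => by
    simp [toL] at h
  | FreeMagma.mul x₁ x₂, FreeMagma.of b, l, l', h => by
    simp [toL] at h
  | FreeMagma.mul x₁ x₂, FreeMagma.mul y₁ y₂, l, l', h => by
    simp only [toL, List.cons_append, List.append_assoc, List.cons.injEq] at h
    obtain ⟨h1, h2⟩ := toL_append_inj x₁ y₁ _ _ h.2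
    obtain ⟨h3, h4⟩ := toL_append_inj x₂ y₂ _ _ h2
    exact ⟨by rw [h1, h3], h4⟩

lemma toL_injective {α : Type*} : Function.Injective (toL (α := α)) := by
  intro x y h
  exact (toL_append_inj x y [] [] (by simp [h])).1

lemma toL_length {α : Type*} (x : FreeMagma α) : (toL x).length = 2 * x.len - 1 := by
  induction x with
  | ih1 a => simp [toL]
  | ih2 x y ihx ihy =>
    have hx := one_le_len x
    have hy := one_le_len y
    rw [toL_mul, List.length_cons, List.length_append, len_mul, ihx, ihy]
    omega

lemma finite_len_le (α : Type*) [Finite α] (n : ℕ) :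
    Finite {x : FreeMagma α // x.len ≤ n} := by
  have : Fintype α := Fintype.ofFinite α
  have hfin : Finite {l : List (Option α) // l.length ≤ 2 * n} :=
    (List.finite_length_le (Option α) (2 * n)).to_subtype
  apply Finite.of_injective
    (fun x : {x : FreeMagma α // x.len ≤ n} =>
      (⟨toL x.1, by rw [toL_length]; have := x.2; omega⟩ :
        {l : List (Option α) // l.length ≤ 2 * n}))
  intro x y h
  exact Subtype.ext (toL_injective (Subtype.mk.inj h))

lemma finite_subtype {α : Type*} [Finite α] (p : FreeMagma α → Prop) (n : ℕ)
    (h : ∀ x, p x → x.len ≤ n) : Finite {x : FreeMagma α // p x} := by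
  have := finite_len_le α n
  exact Finite.of_injective
    (fun x : {x : FreeMagma α // p x} =>
      (⟨x.1, h x.1 x.2⟩ : {x : FreeMagma α // x.len ≤ n}))
    (fun x y h => Subtype.ext (Subtype.mk.inj h))

/-- leaves, left to right -/
def leaves {α : Type*} : FreeMagma α → List α
  | FreeMagma.of a => [a]
  | FreeMagma.mul x y => leaves x ++ leaves y

@[simp] lemma leaves_of {α : Type*} (a : α) : leaves (FreeMagma.of a) = [a] := rfl

@[simp] lemma leaves_mul {α : Type*} (x y : FreeMagma α) :
    leaves (x * y) = leaves x ++ leaves y := rfl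

lemma leaves_length {α : Type*} (x : FreeMagma α) : (leaves x).length = x.len := by
  induction x with
  | ih1 a => simp
  | ih2 x y ihx ihy => simp [ihx, ihy]

def shape {α : Type*} (x : FreeMagma α) : FreeMagma Unit := FreeMagma.map (fun _ => ()) x

@[simp] lemma shape_of {α : Type*} (a : α) : shape (FreeMagma.of a) = FreeMagma.of () := rfl

@[simp] lemma shape_mul {α : Type*} (x y : FreeMagma α) :
    shape (x * y) = shape x * shape y := map_mul'' _ _ _

lemma shape_len {α : Type*} (x : FreeMagma α) : (shape x).len = x.len := len_map _ _

lemma eq_of_shape_leaves {α : Type*} : ∀ x y : FreeMagma α,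
    shape x = shape y → leaves x = leaves y → x = y
  | FreeMagma.of a, FreeMagma.of b, _, hl => by
    simp only [leaves_of, List.cons.injEq] at hl; rw [hl.1]
  | FreeMagma.of a, FreeMagma.mul y₁ y₂, hs, _ => by
    rw [mul_eq, shape_of, shape_mul] at hs
    exact absurd hs (by intro hc; cases hc)
  | FreeMagma.mul x₁ x₂, FreeMagma.of b, hs, _ => by
    rw [mul_eq, shape_of, shape_mul] at hs
    exact absurd hs (by intro hc; cases hc)
  | FreeMagma.mul x₁ x₂, FreeMagma.mul y₁ y₂, hs, hl => by
    rw [mul_eq, mul_eq, shape_mul, shape_mul] at hs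
    have hs1 : shape x₁ = shape y₁ := (mul_inj' hs).1
    have hs2 : shape x₂ = shape y₂ := (mul_inj' hs).2
    have hlen : (leaves x₁).length = (leaves y₁).length := by
      rw [leaves_length, leaves_length, ← shape_len x₁, ← shape_len y₁, hs1]
    rw [mul_eq, mul_eq, leaves_mul, leaves_mul] at hl
    obtain ⟨hl1, hl2⟩ := List.append_inj hl hlen
    rw [mul_eq, mul_eq, eq_of_shape_leaves x₁ y₁ hs1 hl1, eq_of_shape_leaves x₂ y₂ hs2 hl2]

lemma exists_shape_leaves {α : Type*} : ∀ (s : FreeMagma Unit) (l : List α),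
    l.length = s.len → ∃ x : FreeMagma α, shape x = s ∧ leaves x = l
  | FreeMagma.of u, l, hl => by
    match l, hl with
    | [a], _ => exact ⟨FreeMagma.of a, by simp, rfl⟩
  | FreeMagma.mul s₁ s₂, l, hl => by
    rw [mul_eq, len_mul] at hl
    have h1 : (l.take s₁.len).length = s₁.len := by
      rw [List.length_take]
      have := one_le_len s₂
      omega
    have h2 : (l.drop s₁.len).length = s₂.len := by
      rw [List.length_drop]; omega
    obtain ⟨x₁, hx₁s, hx₁l⟩ := exists_shape_leaves s₁ (l.take s₁.len) h1
    obtain ⟨x₂, hx₂s, hx₂l⟩ := exists_shape_leaves s₂ (l.drop s₁.len) h2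
    refine ⟨x₁ * x₂, ?_, ?_⟩
    · rw [mul_eq, shape_mul, hx₁s, hx₂s]
    · rw [leaves_mul, hx₁l, hx₂l, List.take_append_drop]

/-- number of shapes with n leaves -/
noncomputable def T (n : ℕ) : ℕ := cnt (Set.univ : Set (FreeMagma Unit)) n

lemma card_list_eq (γ : Type*) [Finite γ] (n : ℕ) :
    Nat.card {l : List γ // l.length = n} = Nat.card γ ^ n := by
  have : Fintype γ := Fintype.ofFinite γ
  have h : Nat.card {l : List γ // l.length = n} = Nat.card (List.Vector γ n) := rfl
  rw [h, Nat.card_eq_fintype_card, card_vector, Nat.card_eq_fintype_card]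

lemma T_eq (n : ℕ) : T n = Nat.card {s : FreeMagma Unit // s.len = n} := by
  rw [T, cnt]
  exact Nat.card_congr (Equiv.subtypeEquivRight (fun s => by simp))

lemma cnt_univ_eq (γ : Type*) [Finite γ] (n : ℕ) :
    cnt (Set.univ : Set (FreeMagma γ)) n = T n * Nat.card γ ^ n := by
  have e1 : {x : FreeMagma γ // x ∈ Set.univ ∧ x.len = n} ≃
      {s : FreeMagma Unit // s.len = n} × {l : List γ // l.length = n} := by
    refine Equiv.ofBijective
      (fun x => (⟨shape x.1, by rw [shape_len]; exact x.2.2⟩,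
                 ⟨leaves x.1, by rw [leaves_length]; exact x.2.2⟩)) ⟨?_, ?_⟩
    · intro x y h
      simp only [Prod.mk.injEq, Subtype.mk.injEq] at h
      exact Subtype.ext (eq_of_shape_leaves _ _ h.1 h.2)
    · rintro ⟨⟨s, hs⟩, ⟨l, hl⟩⟩
      obtain ⟨x, hxs, hxl⟩ := exists_shape_leaves s l (by rw [hl, hs])
      exact ⟨⟨x, trivial, by rw [← shape_len, hxs, hs]⟩, by simp [hxs, hxl]⟩
  rw [cnt, Nat.card_congr e1, Nat.card_prod, card_list_eq, T_eq]

/-- pad with k extra unit leaves -/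
def pad : ℕ → FreeMagma Unit → FreeMagma Unit
  | 0, x => x
  | k+1, x => pad k x * FreeMagma.of ()

lemma pad_len (k : ℕ) (x : FreeMagma Unit) : (pad k x).len = x.len + k := by
  induction k with
  | zero => rfl
  | succ k ih => simp only [pad, len_mul, ih, len_of]; omega

lemma pad_injective (k : ℕ) : Function.Injective (pad k) := by
  induction k with
  | zero => exact fun x y h => h
  | succ k ih =>
    intro x y h
    simp only [pad] at h
    exact ih (mul_inj' h).1

/-- the left comb of length n+1 -/
def comb (n : ℕ) : FreeMagma Unit := pad n (FreeMagma.of ())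

lemma comb_len (n : ℕ) : (comb n).len = n + 1 := by
  rw [comb, pad_len, len_of]; omega

lemma T_pos {n : ℕ} (hn : 1 ≤ n) : 1 ≤ T n := by
  have : Finite {s : FreeMagma Unit // s ∈ Set.univ ∧ s.len = n} :=
    finite_subtype _ n (fun x hx => le_of_eq hx.2)
  have : Nonempty {s : FreeMagma Unit // s ∈ Set.univ ∧ s.len = n} :=
    ⟨⟨comb (n - 1), trivial, by rw [comb_len]; omega⟩⟩
  exact Nat.card_pos

/-- upper bound for cntLe over univ -/
lemma cntLe_univ_le (γ : Type*) [Finite γ] [Nonempty γ] (n : ℕ) :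
    cntLe (Set.univ : Set (FreeMagma γ)) n ≤ (n + 1) * (T n * Nat.card γ ^ n) := by
  obtain ⟨a0⟩ := ‹Nonempty γ›
  have h1 : Finite {s : FreeMagma Unit // s.len = n} :=
    finite_subtype _ n (fun x hx => le_of_eq hx)
  have h2 : Finite {l : List γ // l.length = n} :=
    (List.finite_length_eq γ n).to_subtype
  have key : cntLe (Set.univ : Set (FreeMagma γ)) n ≤
      Nat.card (Fin (n+1) × {s : FreeMagma Unit // s.len = n} ×
        {l : List γ // l.length = n}) := by
    refine Nat.card_le_card_of_injective (fun x =>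
      (⟨x.1.len, by have := x.2.2; omega⟩,
       ⟨pad (n - x.1.len) (shape x.1), by rw [pad_len, shape_len]; have := x.2.2; omega⟩,
       ⟨leaves x.1 ++ List.replicate (n - x.1.len) a0, by
          rw [List.length_append, List.length_replicate, leaves_length]
          have := x.2.2; omega⟩)) ?_
    rintro ⟨x, _, hx⟩ ⟨y, _, hy⟩ h
    simp only [Prod.mk.injEq, Subtype.mk.injEq, Fin.mk.injEq] at h
    obtain ⟨h1, h2, h3⟩ := h
    have hs : shape x = shape y := by
      rw [h1] at h2; exact pad_injective _ h2
    have hl : leaves x = leaves y :=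
      (List.append_inj h3 (by rw [leaves_length, leaves_length, h1])).1
    exact Subtype.ext (eq_of_shape_leaves _ _ hs hl)
  refine le_trans key (le_of_eq ?_)
  rw [Nat.card_prod, Nat.card_prod, Nat.card_eq_fintype_card, Fintype.card_fin,
    card_list_eq, T_eq]

/-- lower bound for cntLe over univ -/
lemma le_cntLe_univ (γ : Type*) [Finite γ] (n : ℕ) :
    T n * Nat.card γ ^ n ≤ cntLe (Set.univ : Set (FreeMagma γ)) n := by
  rw [← cnt_univ_eq]
  have : Finite {x : FreeMagma γ // x ∈ Set.univ ∧ x.len ≤ n} :=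
    finite_subtype _ n (fun x hx => hx.2)
  exact Nat.card_le_card_of_injective
    (fun x : {x : FreeMagma γ // x ∈ Set.univ ∧ x.len = n} =>
      (⟨x.1, trivial, le_of_eq x.2.2⟩ :
        {x : FreeMagma γ // x ∈ Set.univ ∧ x.len ≤ n}))
    (fun x y h => Subtype.ext (Subtype.mk.inj h))

lemma cntLe_range_eq {B : Type*} (A : Set B) (n : ℕ) :
    cntLe (Set.range (FreeMagma.map (Subtype.val : A → B))) n =
      cntLe (Set.univ : Set (FreeMagma A)) n := by
  refine (Nat.card_congr (Equiv.ofBijective (fun y =>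
    (⟨FreeMagma.map Subtype.val y.1, Set.mem_range_self _, by
        rw [len_map]; exact y.2.2⟩ :
      {x : FreeMagma B // x ∈ Set.range (FreeMagma.map (Subtype.val : A → B)) ∧ x.len ≤ n}))
    ⟨?_, ?_⟩)).symm
  · intro x y h
    exact Subtype.ext (map_injective Subtype.val_injective (Subtype.mk.inj h))
  · rintro ⟨x, ⟨y, rfl⟩, hx⟩
    exact ⟨⟨y, trivial, by rw [← len_map (Subtype.val : A → B)]; exact hx⟩, rfl⟩

end FM8

theorem stmt_8 (B : Type*) [Fintype B] (A : Set B) (hA : A ≠ Set.univ) :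
    Tendsto (fun n =>
        (cntLe (Set.range (FreeMagma.map (Subtype.val : A → B))) n : ℝ) /
          (cntLe (Set.univ : Set (FreeMagma B)) n : ℝ))
      atTop (nhds 0) := by
  classical
  set a : ℕ := Nat.card A with ha_def
  set b : ℕ := Nat.card B with hb_def
  have hab : a < b := by
    have h1 : A.ncard < (Set.univ : Set B).ncard :=
      Set.ncard_lt_ncard (Set.ssubset_univ_iff.2 hA) Set.finite_univ
    rw [Set.ncard_univ] at h1
    rw [ha_def, hb_def, Nat.card_coe_set_eq]
    exact h1
  have hb_pos : 0 < b := Nat.pos_of_ne_zero (by omega)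
  set r : ℝ := (a : ℝ) / b with hr_def
  have hbR : (0 : ℝ) < b := by exact_mod_cast hb_pos
  have hr0 : 0 ≤ r := div_nonneg (by positivity) hbR.le
  have hr1 : r < 1 := (div_lt_one hbR).2 (by exact_mod_cast hab)
  have hg : Tendsto (fun n : ℕ => ((n : ℝ) + 1) * r ^ n) atTop (nhds 0) := by
    have h1 := tendsto_pow_const_mul_const_pow_of_lt_one 1 hr0 hr1
    have h2 := tendsto_pow_const_mul_const_pow_of_lt_one 0 hr0 hr1
    simp only [pow_one, pow_zero, one_mul] at h1 h2
    have := h1.add h2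
    simpa [add_mul] using this
  refine squeeze_zero' ?_ ?_ hg
  · filter_upwards with n
    positivity
  · filter_upwards [eventually_ge_atTop 1] with n hn
    by_cases hAne : Nonempty A
    · have hnum : (cntLe (Set.range (FreeMagma.map (Subtype.val : A → B))) n : ℝ) ≤
          (n + 1) * ((FM8.T n : ℝ) * (a : ℝ) ^ n) := by
        rw [FM8.cntLe_range_eq]
        have h := FM8.cntLe_univ_le A n
        calc (cntLe (Set.univ : Set (FreeMagma A)) n : ℝ)
            ≤ (((n + 1) * (FM8.T n * a ^ n) : ℕ) : ℝ) := by exact_mod_cast h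
          _ = (n + 1) * ((FM8.T n : ℝ) * (a : ℝ) ^ n) := by push_cast; ring
      have hden : ((FM8.T n : ℝ) * (b : ℝ) ^ n) ≤
          (cntLe (Set.univ : Set (FreeMagma B)) n : ℝ) := by
        have h := FM8.le_cntLe_univ B n
        calc ((FM8.T n : ℝ) * (b : ℝ) ^ n) = ((FM8.T n * b ^ n : ℕ) : ℝ) := by push_cast; ring
          _ ≤ _ := by exact_mod_cast h
      have hT : (1 : ℝ) ≤ (FM8.T n : ℝ) := by exact_mod_cast FM8.T_pos hn
      have hdpos : (0 : ℝ) < (FM8.T n : ℝ) * (b : ℝ) ^ n := by positivity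
      calc (cntLe (Set.range (FreeMagma.map (Subtype.val : A → B))) n : ℝ) /
            (cntLe (Set.univ : Set (FreeMagma B)) n : ℝ)
          ≤ ((n + 1) * ((FM8.T n : ℝ) * (a : ℝ) ^ n)) / ((FM8.T n : ℝ) * (b : ℝ) ^ n) :=
            div_le_div₀ (by positivity) hnum hdpos hden
        _ = ((n : ℝ) + 1) * r ^ n := by
            rw [hr_def, div_pow]
            field_simp
    · have hzero : cntLe (Set.range (FreeMagma.map (Subtype.val : A → B))) n = 0 := by
        rw [FM8.cntLe_range_eq]
        have : IsEmpty (FreeMagma A) := by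
          constructor
          intro x
          induction x with
          | ih1 a => exact hAne ⟨a⟩
          | ih2 x y ihx ihy => exact ihx
        rw [cntLe]
        exact Nat.card_of_isEmpty
      rw [hzero]
      simp only [Nat.cast_zero, zero_div]
      positivity
end

section
/- For any element a of the free magma M on one generator with ℓ(a) > 1, the density of the principal subalgebra aM in M is zero, i.e., lim_{n→∞} |aM|_{≤n}/|M|_{≤n} = 0. -/
open Filter

/-- Substitution product `a · x`: replace each leaf of `x` by `a`. -/
def magProd (a : FreeMagma Unit) : FreeMagma Unit → FreeMagma Unit
  | FreeMagma.of _ => a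
  | FreeMagma.mul y z => FreeMagma.mul (magProd a y) (magProd a z)

lemma len_mul' {α : Type*} (x y : FreeMagma α) :
    (FreeMagma.mul x y).len = x.len + y.len := rfl

lemma len_pos' {α : Type*} (x : FreeMagma α) : 1 ≤ x.len := by
  induction x with
  | ih1 _ => exact le_refl _
  | ih2 y z ihy ihz => rw [show y * z = FreeMagma.mul y z from rfl, len_mul']; omega

lemma finite_le' (n : ℕ) : {x : FreeMagma Unit | x.len ≤ n}.Finite := by
  induction n with
  | zero =>
    convert Set.finite_empty
    ext x; simp only [Set.mem_setOf_eq, Set.mem_empty_iff_false, iff_false, not_le]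
    have := len_pos' x; omega
  | succ n ih =>
    apply Set.Finite.subset ((ih.image2 FreeMagma.mul ih).insert (FreeMagma.of ()))
    rintro (x | ⟨y, z⟩) hx
    · simp
    · have hy := len_pos' y; have hz := len_pos' z
      rw [Set.mem_setOf_eq, len_mul'] at hx
      have h1 : y.len ≤ n := by omega
      have h2 : z.len ≤ n := by omega
      exact Set.mem_insert_iff.2 (Or.inr (Set.mem_image2_of_mem h1 h2))

lemma cntLe_eq' {α : Type*} (X : Set (FreeMagma α)) (n : ℕ) :
    cntLe X n = ({x | x ∈ X ∧ x.len ≤ n} : Set (FreeMagma α)).ncard := rfl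

lemma cnt_eq' {α : Type*} (X : Set (FreeMagma α)) (n : ℕ) :
    cnt X n = ({x | x ∈ X ∧ x.len = n} : Set (FreeMagma α)).ncard := rfl

lemma finite_X_le (X : Set (FreeMagma Unit)) (n : ℕ) :
    ({x | x ∈ X ∧ x.len ≤ n} : Set (FreeMagma Unit)).Finite :=
  (finite_le' n).subset (fun _ hx => hx.2)

lemma finite_X_eq (X : Set (FreeMagma Unit)) (n : ℕ) :
    ({x | x ∈ X ∧ x.len = n} : Set (FreeMagma Unit)).Finite :=
  (finite_le' n).subset (fun _ hx => le_of_eq hx.2)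

lemma cntLe_succ' (X : Set (FreeMagma Unit)) (n : ℕ) :
    cntLe X (n + 1) = cntLe X n + cnt X (n + 1) := by
  rw [cntLe_eq', cntLe_eq', cnt_eq',
    ← Set.ncard_union_eq ?_ (finite_X_le X n) (finite_X_eq X (n+1))]
  · congr 1
    ext x; simp only [Set.mem_setOf_eq, Set.mem_union]
    constructor
    · rintro ⟨hX, h⟩; rcases Nat.lt_or_ge x.len (n+1) with h' | h'
      · exact Or.inl ⟨hX, by omega⟩
      · exact Or.inr ⟨hX, by omega⟩
    · rintro (⟨hX, h⟩ | ⟨hX, h⟩) <;> exact ⟨hX, by omega⟩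
  · rw [Set.disjoint_left]
    rintro x ⟨_, h1⟩ ⟨_, h2⟩; omega

lemma cnt_le_cntLe' (X : Set (FreeMagma Unit)) (n : ℕ) : cnt X n ≤ cntLe X n := by
  rw [cnt_eq', cntLe_eq']
  exact Set.ncard_le_ncard (fun x hx => ⟨hx.1, le_of_eq hx.2⟩) (finite_X_le X n)

lemma len_magProd (a : FreeMagma Unit) (x : FreeMagma Unit) :
    (magProd a x).len = a.len * x.len := by
  induction x with
  | ih1 _ => simp [magProd, FreeMagma.len]
  | ih2 y z ihy ihz =>
    rw [show y * z = FreeMagma.mul y z from rfl] at *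
    rw [show magProd a (FreeMagma.mul y z) = FreeMagma.mul (magProd a y) (magProd a z) from rfl,
      len_mul', len_mul', ihy, ihz, Nat.mul_add]

lemma magProd_injective (a : FreeMagma Unit) : Function.Injective (magProd a) := by
  intro x
  induction x with
  | ih1 u =>
    intro y h
    cases y with
    | of v => cases u; cases v; rfl
    | mul y1 y2 =>
      exfalso
      rw [show magProd a (FreeMagma.of u) = a from rfl,
        show magProd a (FreeMagma.mul y1 y2)
          = FreeMagma.mul (magProd a y1) (magProd a y2) from rfl] at h
      have h1 := congrArg FreeMagma.len h
      rw [len_mul', len_magProd, len_magProd] at h1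
      have := len_pos' a; have := len_pos' y1; have := len_pos' y2
      nlinarith
  | ih2 x1 x2 ih1 ih2 =>
    rw [show x1 * x2 = FreeMagma.mul x1 x2 from rfl]
    intro y h
    cases y with
    | of v =>
      exfalso
      rw [show magProd a (FreeMagma.of v) = a from rfl,
        show magProd a (FreeMagma.mul x1 x2)
          = FreeMagma.mul (magProd a x1) (magProd a x2) from rfl] at h
      have h1 := congrArg FreeMagma.len h.symm
      rw [len_mul', len_magProd, len_magProd] at h1
      have := len_pos' a; have := len_pos' x1; have := len_pos' x2
      nlinarith
    | mul y1 y2 =>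
      rw [show magProd a (FreeMagma.mul x1 x2)
            = FreeMagma.mul (magProd a x1) (magProd a x2) from rfl,
        show magProd a (FreeMagma.mul y1 y2)
          = FreeMagma.mul (magProd a y1) (magProd a y2) from rfl] at h
      injection h with h1 h2
      rw [ih1 h1, ih2 h2]

lemma len_eq_one' {x : FreeMagma Unit} (h : x.len = 1) : x = FreeMagma.of () := by
  cases x with
  | of u => cases u; rfl
  | mul y z =>
    exfalso; have := len_pos' y; have := len_pos' z
    rw [len_mul'] at h; omega

lemma len_eq_two' {x : FreeMagma Unit} (h : x.len = 2) :
    x = FreeMagma.mul (FreeMagma.of ()) (FreeMagma.of ()) := by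
  cases x with
  | of u => exact absurd h (by simp [FreeMagma.len])
  | mul y z =>
    have := len_pos' y; have := len_pos' z
    rw [len_mul'] at h
    rw [len_eq_one' (by omega : y.len = 1), len_eq_one' (by omega : z.len = 1)]

def comb : ℕ → FreeMagma Unit
  | 0 => FreeMagma.of ()
  | k + 1 => FreeMagma.mul (FreeMagma.of ()) (comb k)

lemma len_comb (k : ℕ) : (comb k).len = k + 1 := by
  induction k with
  | zero => rfl
  | succ k ih => rw [comb, len_mul', ih]; simp [FreeMagma.len]; omega

lemma cntLe_univ_zero : cntLe (Set.univ : Set (FreeMagma Unit)) 0 = 0 := by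
  rw [cntLe_eq']
  have he : {x : FreeMagma Unit | x ∈ Set.univ ∧ x.len ≤ 0} = ∅ := by
    ext x; simp only [Set.mem_setOf_eq, Set.mem_empty_iff_false, iff_false]
    rintro ⟨-, h⟩; have := len_pos' x; omega
  rw [he, Set.ncard_empty]

lemma cnt_univ_one : cnt (Set.univ : Set (FreeMagma Unit)) 1 = 1 := by
  rw [cnt_eq']
  have : {x : FreeMagma Unit | x ∈ Set.univ ∧ x.len = 1} = {FreeMagma.of ()} := by
    ext x
    simp only [Set.mem_setOf_eq, Set.mem_singleton_iff, Set.mem_univ, true_and]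
    exact ⟨len_eq_one', fun h => by subst h; rfl⟩
  rw [this, Set.ncard_singleton]

lemma cnt_univ_two : cnt (Set.univ : Set (FreeMagma Unit)) 2 = 1 := by
  rw [cnt_eq']
  have : {x : FreeMagma Unit | x ∈ Set.univ ∧ x.len = 2}
      = {FreeMagma.mul (FreeMagma.of ()) (FreeMagma.of ())} := by
    ext x
    simp only [Set.mem_setOf_eq, Set.mem_singleton_iff, Set.mem_univ, true_and]
    exact ⟨len_eq_two', fun h => by subst h; rfl⟩
  rw [this, Set.ncard_singleton]

lemma one_le_cnt_univ {n : ℕ} (h : 1 ≤ n) : 1 ≤ cnt (Set.univ : Set (FreeMagma Unit)) n := by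
  rw [cnt_eq']
  have hne : {x : FreeMagma Unit | x ∈ Set.univ ∧ x.len = n}.Nonempty :=
    ⟨comb (n - 1), Set.mem_univ _, by rw [len_comb]; omega⟩
  exact (Set.ncard_pos (finite_X_eq _ n)).2 hne

lemma two_mul_cnt {n : ℕ} (hn : 2 ≤ n) :
    2 * cnt (Set.univ : Set (FreeMagma Unit)) n
      ≤ cnt (Set.univ : Set (FreeMagma Unit)) (n + 1) := by
  rw [cnt_eq', cnt_eq']
  set T : Set (FreeMagma Unit) := {x | x ∈ Set.univ ∧ x.len = n} with hT
  have hTfin : T.Finite := finite_X_eq _ n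
  set A : Set (FreeMagma Unit) := (fun x => FreeMagma.mul (FreeMagma.of ()) x) '' T with hA
  set B : Set (FreeMagma Unit) := (fun x => FreeMagma.mul x (FreeMagma.of ())) '' T with hB
  have hAinj : Function.Injective (fun x => FreeMagma.mul (FreeMagma.of ()) x) := by
    intro x y h; injection h
  have hBinj : Function.Injective (fun x : FreeMagma Unit => FreeMagma.mul x (FreeMagma.of ())) := by
    intro x y h; injection h
  have hdisj : Disjoint A B := by
    rw [Set.disjoint_left]
    rintro z ⟨x, hx, rfl⟩ ⟨y, hy, h⟩
    injection h with h1 h2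
    have hl := hy.2
    rw [h1] at hl
    simp [FreeMagma.len] at hl
    omega
  have hsub : A ∪ B ⊆ {x : FreeMagma Unit | x ∈ Set.univ ∧ x.len = n + 1} := by
    rintro z (⟨x, hx, rfl⟩ | ⟨x, hx, rfl⟩) <;>
      refine ⟨Set.mem_univ _, ?_⟩ <;> rw [len_mul'] <;>
      simp [FreeMagma.len, hx.2] <;> omega
  calc 2 * T.ncard = A.ncard + B.ncard := by
        rw [hA, hB, Set.ncard_image_of_injective _ hAinj,
          Set.ncard_image_of_injective _ hBinj]; ring
    _ = (A ∪ B).ncard := (Set.ncard_union_eq hdisj (hTfin.image _) (hTfin.image _)).symm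
    _ ≤ _ := Set.ncard_le_ncard hsub (finite_X_eq _ (n + 1))

lemma pow_mul_cnt {m : ℕ} (hm : 2 ≤ m) (k : ℕ) :
    2 ^ k * cnt (Set.univ : Set (FreeMagma Unit)) m
      ≤ cnt (Set.univ : Set (FreeMagma Unit)) (m + k) := by
  induction k with
  | zero => simp
  | succ k ih =>
    have h1 : 2 ^ (k + 1) * cnt (Set.univ : Set (FreeMagma Unit)) m
        = 2 * (2 ^ k * cnt (Set.univ : Set (FreeMagma Unit)) m) := by ring
    rw [h1]
    calc 2 * (2 ^ k * cnt (Set.univ : Set (FreeMagma Unit)) m)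
        ≤ 2 * cnt (Set.univ : Set (FreeMagma Unit)) (m + k) := by omega
      _ ≤ cnt (Set.univ : Set (FreeMagma Unit)) (m + k + 1) := two_mul_cnt (by omega)
      _ = cnt (Set.univ : Set (FreeMagma Unit)) (m + (k + 1)) := by ring_nf

lemma cntLe_univ_le {m : ℕ} (hm : 2 ≤ m) :
    cntLe (Set.univ : Set (FreeMagma Unit)) m
      ≤ 3 * cnt (Set.univ : Set (FreeMagma Unit)) m := by
  have key : ∀ m, 2 ≤ m → cntLe (Set.univ : Set (FreeMagma Unit)) m
      ≤ 1 + 2 * cnt (Set.univ : Set (FreeMagma Unit)) m := by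
    intro m hm
    induction m, hm using Nat.le_induction with
    | base =>
      have e1 : cntLe (Set.univ : Set (FreeMagma Unit)) 2
          = cntLe (Set.univ : Set (FreeMagma Unit)) 1
            + cnt (Set.univ : Set (FreeMagma Unit)) 2 := cntLe_succ' _ 1
      have e0 : cntLe (Set.univ : Set (FreeMagma Unit)) 1
          = cntLe (Set.univ : Set (FreeMagma Unit)) 0
            + cnt (Set.univ : Set (FreeMagma Unit)) 1 := cntLe_succ' _ 0
      rw [e1, e0, cntLe_univ_zero, cnt_univ_one, cnt_univ_two]; omega
    | succ m hm ih =>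
      rw [cntLe_succ']
      have := two_mul_cnt hm
      omega
  have h1 := key m hm
  have h2 := one_le_cnt_univ (by omega : 1 ≤ m)
  omega

lemma cntLe_range_le (a : FreeMagma Unit) (ha : 2 ≤ a.len) (n : ℕ) :
    cntLe (Set.range (magProd a)) n ≤ cntLe (Set.univ : Set (FreeMagma Unit)) (n / 2) := by
  rw [cntLe_eq', cntLe_eq']
  have hsub : {y | y ∈ Set.range (magProd a) ∧ y.len ≤ n}
      ⊆ magProd a '' {x : FreeMagma Unit | x ∈ Set.univ ∧ x.len ≤ n / 2} := by
    rintro y ⟨⟨x, rfl⟩, hlen⟩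
    refine ⟨x, ⟨Set.mem_univ _, ?_⟩, rfl⟩
    rw [len_magProd] at hlen
    have := len_pos' x
    have h2 : 2 * x.len ≤ n := le_trans (Nat.mul_le_mul_right _ ha) hlen
    omega
  calc ({y | y ∈ Set.range (magProd a) ∧ y.len ≤ n}).ncard
      ≤ (magProd a '' {x : FreeMagma Unit | x ∈ Set.univ ∧ x.len ≤ n / 2}).ncard :=
        Set.ncard_le_ncard hsub ((finite_X_le _ (n / 2)).image _)
    _ = ({x : FreeMagma Unit | x ∈ Set.univ ∧ x.len ≤ n / 2}).ncard :=
        Set.ncard_image_of_injective _ (magProd_injective a)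

lemma key_nat (a : FreeMagma Unit) (ha : 2 ≤ a.len) {n : ℕ} (hn : 4 ≤ n) :
    cntLe (Set.range (magProd a)) n * 2 ^ (n / 2)
      ≤ 3 * cntLe (Set.univ : Set (FreeMagma Unit)) n := by
  set m := n / 2 with hm
  have hm2 : 2 ≤ m := by omega
  have hmn : m ≤ n := by omega
  have h1 := cntLe_range_le a ha n
  have h2 := cntLe_univ_le hm2
  have h3 := pow_mul_cnt hm2 (n - m)
  rw [show m + (n - m) = n by omega] at h3
  have h4 : (2:ℕ) ^ m ≤ 2 ^ (n - m) := Nat.pow_le_pow_right (by norm_num) (by omega)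
  have h5 := cnt_le_cntLe' (Set.univ : Set (FreeMagma Unit)) n
  calc cntLe (Set.range (magProd a)) n * 2 ^ m
      ≤ (3 * cnt (Set.univ : Set (FreeMagma Unit)) m) * 2 ^ (n - m) :=
        Nat.mul_le_mul (le_trans h1 h2) h4
    _ = 3 * (2 ^ (n - m) * cnt (Set.univ : Set (FreeMagma Unit)) m) := by ring
    _ ≤ 3 * cnt (Set.univ : Set (FreeMagma Unit)) n := by omega
    _ ≤ 3 * cntLe (Set.univ : Set (FreeMagma Unit)) n := by omega

theorem stmt_9 (a : FreeMagma Unit) (ha : 1 < a.len) :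
    Tendsto (fun n =>
        (cntLe (Set.range (magProd a)) n : ℝ) /
          (cntLe (Set.univ : Set (FreeMagma Unit)) n : ℝ))
      atTop (nhds 0) := by
  have hpos : ∀ n : ℕ, 1 ≤ n → (0:ℝ) < (cntLe (Set.univ : Set (FreeMagma Unit)) n : ℝ) := by
    intro n hn
    have := le_trans (one_le_cnt_univ hn) (cnt_le_cntLe' _ n)
    exact_mod_cast this
  have hg : Tendsto (fun n : ℕ => (3:ℝ) / 2 ^ (n / 2)) atTop (nhds 0) := by
    have h1 : Tendsto (fun k : ℕ => (3:ℝ) / 2 ^ k) atTop (nhds 0) :=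
      Tendsto.div_atTop tendsto_const_nhds
        (tendsto_pow_atTop_atTop_of_one_lt (by norm_num))
    have h2 : Tendsto (fun n : ℕ => n / 2) atTop atTop :=
      tendsto_atTop_atTop.2 fun b => ⟨2 * b, fun n hn => by omega⟩
    exact h1.comp h2
  apply squeeze_zero' (g := fun n : ℕ => (3:ℝ) / 2 ^ (n / 2))
  · filter_upwards [eventually_ge_atTop 1] with n hn
    positivity
  · filter_upwards [eventually_ge_atTop 4] with n hn
    rw [div_le_div_iff₀ (hpos n (by omega)) (by positivity)]
    have := key_nat a ha hn
    calc (cntLe (Set.range (magProd a)) n : ℝ) * 2 ^ (n / 2)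
        = ((cntLe (Set.range (magProd a)) n * 2 ^ (n / 2) : ℕ) : ℝ) := by push_cast; ring
      _ ≤ ((3 * cntLe (Set.univ : Set (FreeMagma Unit)) n : ℕ) : ℝ) := by exact_mod_cast this
      _ = 3 * (cntLe (Set.univ : Set (FreeMagma Unit)) n : ℝ) := by push_cast; ring
  · exact hg
end

section
/- Let N be a nonempty subgroupoid of the free magma M on one generator with minimal generating set G of finite cardinality r = rk(N), and let λ = min{ℓ(x) : x ∈ G}. If r < 4^{λ−1}, then N has null density: lim_{n→∞} |N|_{≤n}/|M|_{≤n} = 0. -/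
open Filter

namespace StmtAux

open Tree

lemma len_mul {α : Type*} (x y : FreeMagma α) : (x * y).len = x.len + y.len := rfl

lemma len_mul' {α : Type*} (x y : FreeMagma α) : (FreeMagma.mul x y).len = x.len + y.len := rfl

lemma len_of {α : Type*} (a : α) : (FreeMagma.of a).len = 1 := rfl

lemma len_pos {α : Type*} (x : FreeMagma α) : 0 < x.len := by
  induction x with
  | ih1 a => simp [len_of]
  | ih2 x y ihx ihy => rw [len_mul]; omega

/-- encode a free magma word over one generator as a binary tree -/
def toTree : FreeMagma Unit → Tree Unit
  | FreeMagma.of _ => Tree.nil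
  | FreeMagma.mul x y => Tree.node () (toTree x) (toTree y)

lemma toTree_mul (x y : FreeMagma Unit) :
    toTree (x * y) = Tree.node () (toTree x) (toTree y) := rfl

lemma numNodes_toTree (x : FreeMagma Unit) : (toTree x).numNodes + 1 = x.len := by
  induction x with
  | ih1 a => simp [toTree, len_of]
  | ih2 x y ihx ihy => rw [toTree_mul, len_mul]; simp only [Tree.numNodes, BinaryTree.numNodes] at *; omega

lemma toTree_injective : Function.Injective toTree := by
  intro x
  induction x with
  | ih1 a =>
    intro y h
    cases y with
    | of b => rfl
    | mul y z => simp [toTree] at h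
  | ih2 x y ihx ihy =>
    intro z h
    rw [toTree_mul] at h
    cases z with
    | of b => simp [toTree] at h
    | mul z w =>
      simp only [toTree, BinaryTree.node.injEq] at h
      show FreeMagma.mul x y = FreeMagma.mul z w
      rw [ihx h.2.1, ihy h.2.2]

def ofTree : Tree Unit → FreeMagma Unit
  | BinaryTree.nil => FreeMagma.of ()
  | BinaryTree.node _ l r => FreeMagma.mul (ofTree l) (ofTree r)

lemma len_ofTree (t : Tree Unit) : (ofTree t).len = t.numNodes + 1 := by
  induction t with
  | nil => simp [ofTree, len_of]
  | node a l r ihl ihr =>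
    show (FreeMagma.mul (ofTree l) (ofTree r)).len = _
    rw [len_mul']
    simp only [Tree.numNodes, BinaryTree.numNodes] at *; omega

lemma ofTree_injective : Function.Injective ofTree := by
  intro s
  induction s with
  | nil =>
    intro t h
    cases t with
    | nil => rfl
    | node a l r => simp [ofTree] at h
  | node a l r ihl ihr =>
    intro t h
    cases t with
    | nil => simp [ofTree] at h
    | node b l' r' =>
      simp only [ofTree] at h
      replace h : ofTree l = ofTree l' ∧ ofTree r = ofTree r' := by injection h with h1 h2; exact ⟨h1, h2⟩
      rw [ihl h.1, ihr h.2]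

lemma finite_tree_le (n : ℕ) : {t : Tree Unit | t.numNodes + 1 ≤ n}.Finite := by
  apply Set.Finite.subset ((Finset.range n).finite_toSet.biUnion
    (fun i _ => (treesOfNumNodesEq i).finite_toSet))
  intro t ht
  simp only [Set.mem_setOf_eq] at ht
  simp only [Set.mem_iUnion, Finset.mem_coe, Finset.mem_range]
  exact ⟨t.numNodes, by omega, BinaryTree.mem_treesOfNumNodesEq_numNodes t⟩

lemma finite_unit_le (n : ℕ) : {x : FreeMagma Unit | x.len ≤ n}.Finite := by
  have hsub : {x : FreeMagma Unit | x.len ≤ n} ⊆ toTree ⁻¹' {t | t.numNodes + 1 ≤ n} := by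
    intro x hx
    simp only [Set.mem_preimage, Set.mem_setOf_eq, numNodes_toTree]
    exact hx
  exact Set.Finite.subset ((finite_tree_le n).preimage toTree_injective.injOn) hsub


-- counting lemmas

lemma finite_subtype_unit_le (X : Set (FreeMagma Unit)) (n : ℕ) :
    Finite {x : FreeMagma Unit // x ∈ X ∧ x.len ≤ n} := by
  have : {x : FreeMagma Unit | x ∈ X ∧ x.len ≤ n} ⊆ {x | x.len ≤ n} := fun x hx => hx.2
  exact ((finite_unit_le n).subset this).to_subtype

lemma catalan_pos (n : ℕ) : 0 < catalan n := by
  have h := succ_mul_catalan_eq_centralBinom n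
  have h2 := Nat.centralBinom_pos n
  rcases Nat.eq_zero_or_pos (catalan n) with hc | hc
  · rw [hc, mul_zero] at h; omega
  · exact hc

lemma catalan_le_four_pow (n : ℕ) : catalan n ≤ 4 ^ n := by
  have h := succ_mul_catalan_eq_centralBinom n
  have h2 : Nat.centralBinom n ≤ 4 ^ n := by
    calc Nat.centralBinom n = (2 * n).choose n := rfl
    _ ≤ (2 * n + 1).choose n := Nat.choose_le_choose n (by omega)
    _ ≤ 4 ^ n := Nat.choose_middle_le_pow n
  calc catalan n ≤ (n + 1) * catalan n := Nat.le_mul_of_pos_left _ (by omega)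
  _ ≤ 4 ^ n := by omega

lemma four_pow_le_catalan (n : ℕ) : 4 ^ n ≤ 2 * (n + 1) ^ 2 * catalan n := by
  rcases Nat.eq_zero_or_pos n with h | h
  · subst h; simp [catalan_zero]
  · calc 4 ^ n ≤ 2 * n * Nat.centralBinom n :=
        Nat.four_pow_le_two_mul_self_mul_centralBinom n h
    _ = 2 * n * ((n + 1) * catalan n) := by rw [succ_mul_catalan_eq_centralBinom]
    _ ≤ 2 * (n + 1) ^ 2 * catalan n := by ring_nf; nlinarith [catalan_pos n]

/-- lower bound on number of all words of length ≤ n -/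
lemma geom_sum_four_le (n : ℕ) : ∑ k ∈ Finset.range n, (4:ℕ) ^ k ≤ 4 ^ n := by
  induction n with
  | zero => simp
  | succ m ih =>
    rw [Finset.sum_range_succ, pow_succ]
    omega

lemma catalan_le_cntLe (n : ℕ) :
    catalan n ≤ cntLe (Set.univ : Set (FreeMagma Unit)) (n + 1) := by
  haveI := finite_subtype_unit_le (Set.univ : Set (FreeMagma Unit)) (n + 1)
  rw [← BinaryTree.treesOfNumNodesEq_card_eq_catalan, ← Nat.card_eq_finsetCard]
  apply Nat.card_le_card_of_injective
    (f := fun t : {t // t ∈ treesOfNumNodesEq n} =>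
      (⟨ofTree t.1, trivial, by
        rw [len_ofTree, show Tree.numNodes t.1 = n from BinaryTree.mem_treesOfNumNodesEq.mp t.2]⟩ :
        {x : FreeMagma Unit // x ∈ (Set.univ : Set (FreeMagma Unit)) ∧ x.len ≤ n + 1}))
  intro s t h
  simp only [Subtype.mk.injEq] at h
  exact Subtype.ext (ofTree_injective h)

/-- upper bound on number of all words of length ≤ n -/
lemma cntLe_univ_le (n : ℕ) :
    cntLe (Set.univ : Set (FreeMagma Unit)) n ≤ 4 ^ n := by
  have step1 : cntLe (Set.univ : Set (FreeMagma Unit)) n ≤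
      ((Finset.range n).biUnion treesOfNumNodesEq).card := by
    rw [← Nat.card_eq_finsetCard]
    apply Nat.card_le_card_of_injective
      (f := fun x : {x : FreeMagma Unit // x ∈ (Set.univ : Set (FreeMagma Unit)) ∧ x.len ≤ n} =>
        (⟨toTree x.1, by
          rw [Finset.mem_biUnion]
          refine ⟨(toTree x.1).numNodes, ?_, BinaryTree.mem_treesOfNumNodesEq_numNodes _⟩
          rw [Finset.mem_range]
          have := numNodes_toTree x.1
          have := x.2.2
          omega⟩ : {t // t ∈ (Finset.range n).biUnion treesOfNumNodesEq}))
    intro s t h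
    simp only [Subtype.mk.injEq] at h
    exact Subtype.ext (toTree_injective h)
  have step2 : ((Finset.range n).biUnion treesOfNumNodesEq).card ≤
      ∑ k ∈ Finset.range n, catalan k := by
    refine (Finset.card_biUnion_le).trans ?_
    exact Finset.sum_le_sum fun k _ => (BinaryTree.treesOfNumNodesEq_card_eq_catalan k).le
  have step3 : ∑ k ∈ Finset.range n, catalan k ≤ ∑ k ∈ Finset.range n, 4 ^ k :=
    Finset.sum_le_sum fun k _ => catalan_le_four_pow k
  have step4 := geom_sum_four_le n
  omega


section Shape
variable {β : Type*}

def shape : FreeMagma β → FreeMagma Unit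
  | FreeMagma.of _ => FreeMagma.of ()
  | FreeMagma.mul x y => FreeMagma.mul (shape x) (shape y)

def leaves : FreeMagma β → List β
  | FreeMagma.of a => [a]
  | FreeMagma.mul x y => leaves x ++ leaves y

lemma len_shape (x : FreeMagma β) : (shape x).len = x.len := by
  induction x with
  | ih1 a => rfl
  | ih2 x y ihx ihy =>
    show (FreeMagma.mul (shape x) (shape y)).len = _
    rw [len_mul', ihx, ihy]; rfl

lemma length_leaves (x : FreeMagma β) : (leaves x).length = x.len := by
  induction x with
  | ih1 a => rfl
  | ih2 x y ihx ihy =>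
    show (leaves x ++ leaves y).length = _
    rw [List.length_append, ihx, ihy]; rfl

lemma shape_leaves_inj : ∀ {x y : FreeMagma β},
    shape x = shape y → leaves x = leaves y → x = y := by
  intro x
  induction x with
  | ih1 a =>
    intro y hs hl
    cases y with
    | of b =>
      have : [a] = [b] := hl
      simp at this
      rw [this]
    | mul y z => exact absurd hs (by simp [shape])
  | ih2 x₁ x₂ ih₁ ih₂ =>
    intro y hs hl
    cases y with
    | of b => exact absurd hs (by simp [shape])
    | mul y₁ y₂ =>
      simp only [shape] at hs
      replace hs : shape x₁ = shape y₁ ∧ shape x₂ = shape y₂ := by injection hs with h1 h2; exact ⟨h1, h2⟩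
      have hlen : (leaves x₁).length = (leaves y₁).length := by
        rw [length_leaves, length_leaves, ← len_shape x₁, ← len_shape y₁, hs.1]
      have hl' : leaves x₁ ++ leaves x₂ = leaves y₁ ++ leaves y₂ := hl
      obtain ⟨h1, h2⟩ := List.append_inj hl' hlen
      show FreeMagma.mul x₁ x₂ = FreeMagma.mul y₁ y₂
      rw [ih₁ hs.1 h1, ih₂ hs.2 h2]

/-- number of lists over β of length ≤ m, bounded -/
lemma card_lists_le [Finite β] (m : ℕ) (r : ℕ) (hr : Nat.card β ≤ r) (hr1 : 1 ≤ r) :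
    Nat.card {l : List β // l.length ≤ m} ≤ (m + 1) * r ^ m := by
  induction m with
  | zero =>
    have e : Nat.card {l : List β // l.length ≤ 0} = ({l : List β | l.length ≤ 0}).ncard :=
      Nat.card_coe_set_eq _
    have hsub : {l : List β | l.length ≤ 0} ⊆ {([] : List β)} := by
      intro l hl; simp_all
    have := Set.ncard_le_ncard hsub (Set.finite_singleton _)
    rw [Set.ncard_singleton] at this
    simpa [e] using this
  | succ m ih =>
    have hcard2 : Nat.card {l : List β // l.length = m + 1} ≤ r ^ (m + 1) := by
      haveI := Fintype.ofFinite β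
      have e2 : Nat.card {l : List β // l.length = m + 1} =
          Fintype.card β ^ (m + 1) := by
        rw [show {l : List β // l.length = m + 1} = List.Vector β (m + 1) from rfl,
          Nat.card_eq_fintype_card, card_vector]
      rw [e2]
      exact Nat.pow_le_pow_left (by rwa [Nat.card_eq_fintype_card] at hr) _
    have e1 : Nat.card {l : List β // l.length ≤ m + 1} =
        ({l : List β | l.length ≤ m + 1}).ncard := Nat.card_coe_set_eq _
    have e2 : Nat.card {l : List β // l.length ≤ m} =
        ({l : List β | l.length ≤ m}).ncard := Nat.card_coe_set_eq _
    have e3 : Nat.card {l : List β // l.length = m + 1} =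
        ({l : List β | l.length = m + 1}).ncard := Nat.card_coe_set_eq _
    have hunion : {l : List β | l.length ≤ m + 1} =
        {l : List β | l.length ≤ m} ∪ {l : List β | l.length = m + 1} := by
      ext l; simp only [Set.mem_setOf_eq, Set.mem_union]; omega
    have hle := Set.ncard_union_le {l : List β | l.length ≤ m} {l : List β | l.length = m + 1}
    have hpow : r ^ m ≤ r ^ (m + 1) := Nat.pow_le_pow_right hr1 (by omega)
    have key : (m + 1) * r ^ m + r ^ (m + 1) ≤ (m + 1 + 1) * r ^ (m + 1) := by nlinarith
    rw [e1, hunion]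
    omega
end Shape

section Words
variable {β : Type*} [Finite β]

/-- the encoding of a word over β by its shape and list of leaves -/
noncomputable def encode (m : ℕ) (w : {w : FreeMagma β // w.len ≤ m}) :
    {u : FreeMagma Unit // u ∈ (Set.univ : Set (FreeMagma Unit)) ∧ u.len ≤ m} ×
      {l : List β // l.length ≤ m} :=
  ⟨⟨shape w.1, trivial, by rw [len_shape]; exact w.2⟩,
   ⟨leaves w.1, by rw [length_leaves]; exact w.2⟩⟩

lemma encode_injective (m : ℕ) : Function.Injective (encode (β := β) m) := by
  intro v w h
  simp only [encode, Prod.mk.injEq, Subtype.mk.injEq] at h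
  exact Subtype.ext (shape_leaves_inj h.1 h.2)

lemma finite_words_le (m : ℕ) : Finite {w : FreeMagma β // w.len ≤ m} := by
  haveI := finite_subtype_unit_le (Set.univ) m
  haveI : Finite {l : List β // l.length ≤ m} := (List.finite_length_le β m).to_subtype
  exact Finite.of_injective _ (encode_injective m)

lemma card_words_le (m : ℕ) (r : ℕ) (hr : Nat.card β ≤ r) (hr1 : 1 ≤ r) :
    Nat.card {w : FreeMagma β // w.len ≤ m} ≤ 4 ^ m * ((m + 1) * r ^ m) := by
  haveI := finite_subtype_unit_le (Set.univ : Set (FreeMagma Unit)) m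
  haveI : Finite {l : List β // l.length ≤ m} := (List.finite_length_le β m).to_subtype
  calc Nat.card {w : FreeMagma β // w.len ≤ m}
      ≤ Nat.card ({u : FreeMagma Unit // u ∈ (Set.univ : Set (FreeMagma Unit)) ∧ u.len ≤ m} ×
        {l : List β // l.length ≤ m}) :=
        Nat.card_le_card_of_injective _ (encode_injective m)
    _ = cntLe (Set.univ : Set (FreeMagma Unit)) m * Nat.card {l : List β // l.length ≤ m} :=
        Nat.card_prod _ _
    _ ≤ 4 ^ m * ((m + 1) * r ^ m) :=
        Nat.mul_le_mul (cntLe_univ_le m) (card_lists_le m r hr hr1)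

end Words

section Magma

variable (G : Set (FreeMagma Unit))

/-- evaluation of formal words over G in the magma -/
noncomputable def phi : FreeMagma G →ₙ* FreeMagma Unit :=
  FreeMagma.lift (fun g : G => (g : FreeMagma Unit))

lemma len_phi (lam : ℕ) (hlam : ∀ g ∈ G, lam ≤ FreeMagma.len g) (w : FreeMagma G) :
    lam * w.len ≤ (phi G w).len := by
  induction w with
  | ih1 a =>
    rw [len_of]
    simpa [phi, FreeMagma.lift_of] using hlam a.1 a.2
  | ih2 x y ihx ihy =>
    rw [len_mul, map_mul, len_mul, Nat.mul_add]
    omega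

lemma mem_range_phi (N : Subsemigroup (FreeMagma Unit)) (hgen : Subsemigroup.closure G = N)
    {x : FreeMagma Unit} (hx : x ∈ N) : ∃ w : FreeMagma G, phi G w = x := by
  rw [← hgen] at hx
  induction hx using Subsemigroup.closure_induction with
  | mem g hg => exact ⟨FreeMagma.of ⟨g, hg⟩, by simp [phi, FreeMagma.lift_of]⟩
  | mul x y hx hy ihx ihy =>
    obtain ⟨w1, hw1⟩ := ihx
    obtain ⟨w2, hw2⟩ := ihy
    exact ⟨w1 * w2, by rw [map_mul, hw1, hw2]⟩

/-- the main counting bound for the numerator -/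
lemma cntLe_N_le (N : Subsemigroup (FreeMagma Unit)) (hgen : Subsemigroup.closure G = N)
    (lam : ℕ) (hlam0 : 0 < lam) (hlam : ∀ g ∈ G, lam ≤ FreeMagma.len g)
    [Finite G] (r : ℕ) (hr : Nat.card G ≤ r) (hr1 : 1 ≤ r) (n : ℕ) :
    cntLe (N : Set (FreeMagma Unit)) n ≤
      4 ^ (n / lam) * ((n / lam + 1) * r ^ (n / lam)) := by
  set m := n / lam with hm
  haveI := finite_words_le (β := G) m
  refine le_trans ?_ (card_words_le (β := G) m r hr hr1)
  -- build an injective map from elements of N of length ≤ n to words of length ≤ m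
  have hchoice : ∀ x : {x : FreeMagma Unit // x ∈ (N : Set (FreeMagma Unit)) ∧ x.len ≤ n},
      ∃ w : FreeMagma G, phi G w = x.1 := fun x => mem_range_phi G N hgen x.2.1
  choose f hf using hchoice
  have hflen : ∀ x, (f x).len ≤ m := by
    intro x
    have h1 := len_phi G lam hlam (f x)
    rw [hf x] at h1
    have h2 : lam * (f x).len ≤ n := le_trans h1 x.2.2
    rw [hm, Nat.le_div_iff_mul_le hlam0, Nat.mul_comm]
    exact h2
  apply Nat.card_le_card_of_injective (fun x => (⟨f x, hflen x⟩ : {w : FreeMagma G // w.len ≤ m}))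
  intro x y h
  simp only [Subtype.mk.injEq] at h
  have : phi G (f x) = phi G (f y) := by rw [h]
  rw [hf x, hf y] at this
  exact Subtype.ext this

end Magma

end StmtAux

open StmtAux in
theorem stmt_10 (N : Subsemigroup (FreeMagma Unit))
    (hne : (N : Set (FreeMagma Unit)).Nonempty)
    (G : Set (FreeMagma Unit)) (hgen : Subsemigroup.closure G = N)
    (hmin : ∀ G' : Set (FreeMagma Unit), Subsemigroup.closure G' = N → G ⊆ G')
    (hfin : G.Finite) (lam : ℕ) (hlam : IsLeast (FreeMagma.len '' G) lam)
    (hrk : G.ncard < 4 ^ (lam - 1)) :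
    Tendsto (fun n =>
        (cntLe (N : Set (FreeMagma Unit)) n : ℝ) /
          (cntLe (Set.univ : Set (FreeMagma Unit)) n : ℝ))
      atTop (nhds 0) := by
  haveI : Finite G := hfin.to_subtype
  obtain ⟨g₀, hg₀, hg₀len⟩ := hlam.1
  set r : ℕ := G.ncard with hrdef
  have hlam0 : 0 < lam := hg₀len ▸ len_pos g₀
  have hlamLB : ∀ g ∈ G, lam ≤ FreeMagma.len g := fun g hg =>
    hlam.2 ⟨g, hg, rfl⟩
  have hr1 : 1 ≤ r := (Set.ncard_pos hfin).mpr ⟨g₀, hg₀⟩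
  have hrcard : Nat.card G ≤ r := (Nat.card_coe_set_eq G).le
  have hr4 : 4 * r < 4 ^ lam := by
    have : 4 ^ lam = 4 * 4 ^ (lam - 1) := by
      rw [← pow_succ']
      congr 1
      omega
    omega
  -- the geometric ratio
  set t : ℝ := (4 * r : ℝ) / (4 : ℝ) ^ lam with htdef
  have h4lam : (0:ℝ) < (4:ℝ) ^ lam := by positivity
  have ht0 : 0 < t := by positivity
  have ht1 : t < 1 := by
    rw [htdef, div_lt_one h4lam]
    calc (4 * r : ℝ) = ((4 * r : ℕ) : ℝ) := by push_cast; ring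
    _ < ((4 ^ lam : ℕ) : ℝ) := by exact_mod_cast hr4
    _ = (4:ℝ) ^ lam := by push_cast; ring
  -- the dominating sequence
  set h : ℕ → ℝ := fun k => 8 * (lam:ℝ) ^ 2 * ((k:ℝ) + 1) ^ 3 * t ^ k with hhdef
  have hh0 : Tendsto h atTop (nhds 0) := by
    have base : Tendsto (fun k : ℕ => ((k:ℝ)) ^ 3 * t ^ k) atTop (nhds 0) :=
      tendsto_pow_const_mul_const_pow_of_lt_one 3 ht0.le ht1
    have shift : Tendsto (fun k : ℕ => (((k:ℝ)) + 1) ^ 3 * t ^ (k + 1)) atTop (nhds 0) := by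
      have := (tendsto_add_atTop_iff_nat 1).mpr base
      refine this.congr fun k => ?_
      push_cast
      ring
    have main : Tendsto (fun k : ℕ => (((k:ℝ)) + 1) ^ 3 * t ^ k) atTop (nhds 0) := by
      have := shift.mul_const t⁻¹
      rw [zero_mul] at this
      refine this.congr fun k => ?_
      have e : t ^ (k + 1) * t⁻¹ = t ^ k := by
        rw [pow_succ, mul_assoc, mul_inv_cancel₀ ht0.ne', mul_one]
      rw [mul_assoc, e]
    have := main.const_mul (8 * (lam:ℝ) ^ 2)
    rw [mul_zero] at this
    refine this.congr fun k => ?_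
    rw [hhdef]
    ring
  have hdivtop : Tendsto (fun n : ℕ => n / lam) atTop atTop := by
    refine tendsto_atTop_atTop.mpr fun b => ⟨lam * b, fun n hn => ?_⟩
    rw [Nat.le_div_iff_mul_le hlam0, Nat.mul_comm]
    exact hn
  have hg0 : Tendsto (fun n : ℕ => h (n / lam)) atTop (nhds 0) := hh0.comp hdivtop
  refine tendsto_of_tendsto_of_tendsto_of_le_of_le' tendsto_const_nhds hg0
    (Eventually.of_forall fun n => by positivity) ?_
  filter_upwards [eventually_ge_atTop 1] with n hn1
  -- main estimate for n ≥ 1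
  set m : ℕ := n / lam with hmdef
  set A : ℕ := cntLe (N : Set (FreeMagma Unit)) n with hAdef
  set B : ℕ := cntLe (Set.univ : Set (FreeMagma Unit)) n with hBdef
  have hA : A ≤ 4 ^ m * ((m + 1) * r ^ m) :=
    cntLe_N_le G N hgen lam hlam0 hlamLB r hrcard hr1 n
  have hB1 : catalan (n - 1) ≤ B := by
    have := catalan_le_cntLe (n - 1)
    rwa [show n - 1 + 1 = n by omega] at this
  have hBpos : 0 < B := lt_of_lt_of_le (catalan_pos _) hB1
  have hB2 : 4 ^ (n - 1) ≤ 2 * n ^ 2 * B := by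
    have h1 := four_pow_le_catalan (n - 1)
    rw [show n - 1 + 1 = n by omega] at h1
    calc (4:ℕ) ^ (n - 1) ≤ 2 * n ^ 2 * catalan (n - 1) := h1
    _ ≤ 2 * n ^ 2 * B := Nat.mul_le_mul_left _ hB1
  have hn : n ≤ lam * (m + 1) := by
    rw [Nat.mul_succ]
    have h1 : lam * m + n % lam = n := by rw [hmdef]; exact Nat.div_add_mod n lam
    have h2 : n % lam < lam := Nat.mod_lt n hlam0
    calc n = lam * m + n % lam := h1.symm
    _ ≤ lam * m + lam := Nat.add_le_add_left h2.le _
  have hlm : lam * m ≤ n := by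
    rw [hmdef, Nat.mul_comm]
    exact Nat.div_mul_le_self n lam
  -- now in ℝ
  have hBposR : (0:ℝ) < (B:ℝ) := by exact_mod_cast hBpos
  rw [div_le_iff₀ hBposR]
  have h2n : (0:ℝ) < 2 * (n:ℝ) ^ 2 := by
    have : (1:ℝ) ≤ (n:ℝ) := by exact_mod_cast hn1
    nlinarith
  refine le_of_mul_le_mul_right ?_ h2n
  have key1 : (A:ℝ) * (2 * (n:ℝ) ^ 2) ≤
      2 * (lam:ℝ) ^ 2 * ((m:ℝ) + 1) ^ 3 * (4 * (r:ℝ)) ^ m := by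
    have hAr : (A:ℝ) ≤ 4 ^ m * (((m:ℝ) + 1) * (r:ℝ) ^ m) := by exact_mod_cast hA
    have hnr : (n:ℝ) ≤ (lam:ℝ) * ((m:ℝ) + 1) := by exact_mod_cast hn
    have hnr2 : (n:ℝ) ^ 2 ≤ ((lam:ℝ) * ((m:ℝ) + 1)) ^ 2 := by
      apply pow_le_pow_left₀ (by positivity) hnr
    calc (A:ℝ) * (2 * (n:ℝ) ^ 2)
        ≤ (4 ^ m * (((m:ℝ) + 1) * (r:ℝ) ^ m)) * (2 * ((lam:ℝ) * ((m:ℝ) + 1)) ^ 2) := by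
          apply mul_le_mul hAr (by nlinarith) (by positivity) (by positivity)
      _ = 2 * (lam:ℝ) ^ 2 * ((m:ℝ) + 1) ^ 3 * (4 * (r:ℝ)) ^ m := by
          rw [mul_pow (4:ℝ) (r:ℝ) m]
          ring
  have hfour : ((4:ℝ) ^ lam) ^ m ≤ 4 * (4:ℝ) ^ (n - 1) := by
    have e1 : ((4:ℝ) ^ lam) ^ m = (4:ℝ) ^ (lam * m) := by rw [← pow_mul]
    have e2 : (4:ℝ) ^ (lam * m) ≤ (4:ℝ) ^ n := by
      apply pow_le_pow_right₀ (by norm_num) hlm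
    have e3 : (4:ℝ) ^ n = 4 * (4:ℝ) ^ (n - 1) := by
      rw [← pow_succ']
      congr 1
      omega
    rw [e1, ← e3]
    exact e2
  have key2 : 2 * (lam:ℝ) ^ 2 * ((m:ℝ) + 1) ^ 3 * (4 * (r:ℝ)) ^ m ≤
      h m * (4:ℝ) ^ (n - 1) := by
    have et : t ^ m * ((4:ℝ) ^ lam) ^ m = (4 * (r:ℝ)) ^ m := by
      rw [← mul_pow, htdef, div_mul_cancel₀ _ h4lam.ne']
    rw [hhdef, ← et]
    calc 2 * (lam:ℝ) ^ 2 * ((m:ℝ) + 1) ^ 3 * (t ^ m * ((4:ℝ) ^ lam) ^ m)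
        ≤ 2 * (lam:ℝ) ^ 2 * ((m:ℝ) + 1) ^ 3 * (t ^ m * (4 * (4:ℝ) ^ (n - 1))) := by
          apply mul_le_mul_of_nonneg_left (mul_le_mul_of_nonneg_left hfour (by positivity))
            (by positivity)
      _ = 8 * (lam:ℝ) ^ 2 * ((m:ℝ) + 1) ^ 3 * t ^ m * (4:ℝ) ^ (n - 1) := by ring
  have key3 : h m * (4:ℝ) ^ (n - 1) ≤ h m * (B:ℝ) * (2 * (n:ℝ) ^ 2) := by
    have hB2r : (4:ℝ) ^ (n - 1) ≤ 2 * (n:ℝ) ^ 2 * (B:ℝ) := by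
      have : ((4:ℕ) ^ (n - 1) : ℝ) ≤ ((2 * n ^ 2 * B : ℕ) : ℝ) := by exact_mod_cast hB2
      push_cast at this
      linarith
    have hh : 0 ≤ h m := by rw [hhdef]; positivity
    calc h m * (4:ℝ) ^ (n - 1) ≤ h m * (2 * (n:ℝ) ^ 2 * (B:ℝ)) :=
          mul_le_mul_of_nonneg_left hB2r hh
    _ = h m * (B:ℝ) * (2 * (n:ℝ) ^ 2) := by ring
  calc (A:ℝ) * (2 * (n:ℝ) ^ 2) ≤ 2 * (lam:ℝ) ^ 2 * ((m:ℝ) + 1) ^ 3 * (4 * (r:ℝ)) ^ m := key1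
  _ ≤ h m * (4:ℝ) ^ (n - 1) := key2
  _ ≤ h m * (B:ℝ) * (2 * (n:ℝ) ^ 2) := key3
end

section
/- Every proper nonempty subgroupoid of the free magma on one generator of rank at most 3 has null density. -/
open Filter

namespace Aux11

variable {α β : Type*}

theorem len_mul (x y : FreeMagma α) : (x * y).len = x.len + y.len := rfl

/-- preorder shape of a tree -/
def shape : FreeMagma α → List Bool
  | .of _ => [false]
  | .mul x y => true :: (shape x ++ shape y)

/-- leaf labels of a tree -/
def leaves : FreeMagma α → List α
  | .of a => [a]
  | .mul x y => leaves x ++ leaves y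



@[simp] theorem len_of (a : α) : (FreeMagma.of a).len = 1 := rfl
@[simp] theorem shape_of (a : α) : shape (FreeMagma.of a) = [false] := rfl
@[simp] theorem shape_mul (x y : FreeMagma α) : shape (x * y) = true :: (shape x ++ shape y) := rfl
@[simp] theorem leaves_of (a : α) : leaves (FreeMagma.of a) = [a] := rfl
@[simp] theorem leaves_mul (x y : FreeMagma α) : leaves (x * y) = leaves x ++ leaves y := rfl

theorem len_pos (x : FreeMagma α) : 1 ≤ x.len := by
  induction x with
  | ih1 a => exact le_refl _
  | ih2 x y ihx ihy => rw [len_mul]; omega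

theorem length_leaves (x : FreeMagma α) : (leaves x).length = x.len := by
  induction x with
  | ih1 a => rfl
  | ih2 x y ihx ihy => simp [len_mul, ihx, ihy]

theorem length_shape (x : FreeMagma α) : (shape x).length + 1 = 2 * x.len := by
  induction x with
  | ih1 a => rfl
  | ih2 x y ihx ihy => simp [len_mul]; omega

theorem encode_inj : ∀ (x y : FreeMagma α) (s₁ s₂ : List Bool) (t₁ t₂ : List α),
    shape x ++ s₁ = shape y ++ s₂ → leaves x ++ t₁ = leaves y ++ t₂ →
    x = y ∧ s₁ = s₂ ∧ t₁ = t₂ := by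
  intro x
  induction x with
  | ih1 a =>
    intro y
    induction y with
    | ih1 b =>
      intro s₁ s₂ t₁ t₂ hs ht
      simp only [shape_of, leaves_of, List.cons_append, List.nil_append, List.cons.injEq] at hs ht
      exact ⟨by rw [ht.1], hs.2, ht.2⟩
    | ih2 y₁ y₂ ih ih' =>
      intro s₁ s₂ t₁ t₂ hs ht
      simp only [shape_of, shape_mul, List.cons_append, List.nil_append, List.cons.injEq] at hs
      exact absurd hs.1 (by simp)
  | ih2 x₁ x₂ ih₁ ih₂ =>
    intro y
    induction y with
    | ih1 b =>
      intro s₁ s₂ t₁ t₂ hs ht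
      simp only [shape_of, shape_mul, List.cons_append, List.nil_append, List.cons.injEq] at hs
      exact absurd hs.1 (by simp)
    | ih2 y₁ y₂ ih ih' =>
      intro s₁ s₂ t₁ t₂ hs ht
      simp only [shape_mul, leaves_mul, List.cons_append, List.append_assoc, List.cons.injEq] at hs ht
      obtain ⟨h1, hs', ht'⟩ := ih₁ y₁ _ _ _ _ hs.2 ht
      obtain ⟨h2, hs'', ht''⟩ := ih₂ y₂ _ _ _ _ hs' ht'
      exact ⟨by rw [h1, h2], hs'', ht''⟩

theorem shape_leaves_inj {x y : FreeMagma α} (hs : shape x = shape y)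
    (ht : leaves x = leaves y) : x = y := by
  have := encode_inj x y [] [] [] [] (by simp [hs]) (by simp [ht])
  exact this.1

/-- padding encoding of bounded-length lists into a finite type -/
def padEnc [Inhabited β] (n : ℕ) (l : {l : List β // l.length ≤ n}) :
    Fin (n + 1) × (Fin n → β) :=
  (⟨l.1.length, Nat.lt_succ_of_le l.2⟩, fun i => l.1.getD i default)

theorem padEnc_inj [Inhabited β] (n : ℕ) : Function.Injective (padEnc (β := β) n) := by
  rintro ⟨l₁, h₁⟩ ⟨l₂, h₂⟩ h
  simp only [padEnc, Prod.mk.injEq, Fin.mk.injEq] at h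
  obtain ⟨hlen, hfun⟩ := h
  apply Subtype.ext
  apply List.ext_getElem hlen
  intro i hi₁ hi₂
  have hin : i < n := lt_of_lt_of_le hi₁ h₁
  have := congrFun hfun ⟨i, hin⟩
  simpa [List.getD_eq_getElem, hi₁, hi₂] using this

/-- evaluation of a word -/
def ev [Mul β] (f : α → β) : FreeMagma α → β
  | .of a => f a
  | .mul x y => ev f x * ev f y

theorem len_ev (f : α → FreeMagma β) (hf : ∀ a, 2 ≤ (f a).len) (w : FreeMagma α) :
    2 * w.len ≤ (ev f w).len := by
  induction w with
  | ih1 a => simpa [ev] using hf a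
  | ih2 x y ihx ihy =>
    have h : (ev f (x * y)).len = (ev f x).len + (ev f y).len := rfl
    rw [h, len_mul]
    omega

theorem closure_of_top : Subsemigroup.closure {FreeMagma.of ()} = (⊤ : Subsemigroup (FreeMagma Unit)) := by
  rw [eq_top_iff]
  have : ∀ x : FreeMagma Unit, x ∈ Subsemigroup.closure {FreeMagma.of ()} := by
    intro x
    induction x with
    | ih1 a => exact Subsemigroup.subset_closure rfl
    | ih2 x y ihx ihy => exact Subsemigroup.mul_mem _ ihx ihy
  exact fun x _ => this x

/-- binary trees to magma elements -/
def toFM : Tree Unit → FreeMagma Unit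
  | .nil => .of ()
  | .node _ l r => toFM l * toFM r

def toTree : FreeMagma Unit → Tree Unit
  | .of _ => .nil
  | .mul x y => .node () (toTree x) (toTree y)

theorem toTree_toFM' : ∀ t, toTree (toFM t) = t := by
  intro t
  induction t with
  | nil => rfl
  | node a l r ihl ihr => simp [toFM, toTree, ihl, ihr]

theorem toFM_inj : Function.Injective toFM :=
  Function.LeftInverse.injective toTree_toFM'

theorem len_toFM (t : Tree Unit) : (toFM t).len = t.numNodes + 1 := by
  induction t with
  | nil => rfl
  | node a l r ihl ihr =>
    show (toFM l * toFM r).len = _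
    rw [len_mul, ihl, ihr]; simp only [Tree.numNodes, BinaryTree.numNodes]
    omega

theorem finite_lenLe [Inhabited α] [Finite α] (X : Set (FreeMagma α)) (n : ℕ) :
    Finite {x : FreeMagma α // x ∈ X ∧ x.len ≤ n} := by
  have hinj : Function.Injective (fun x : {x : FreeMagma α // x ∈ X ∧ x.len ≤ n} =>
      (padEnc (2 * n) ⟨shape x.1, by have := length_shape x.1; have := x.2.2; omega⟩,
       padEnc n ⟨leaves x.1, by rw [length_leaves]; exact x.2.2⟩)) := by
    intro a b h
    simp only [Prod.mk.injEq] at h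
    have h1 := padEnc_inj _ h.1
    have h2 := padEnc_inj _ h.2
    apply Subtype.ext
    exact shape_leaves_inj (congrArg Subtype.val h1) (congrArg Subtype.val h2)
  exact Finite.of_injective _ hinj

theorem cat_lb (k : ℕ) : 4 ^ k ≤ (2 * k + 2) * ((k + 1) * catalan k) := by
  rcases Nat.eq_zero_or_pos k with h | h
  · subst h; simp [catalan]
  · rw [succ_mul_catalan_eq_centralBinom]
    calc 4 ^ k ≤ 2 * k * Nat.centralBinom k :=
          Nat.four_pow_le_two_mul_self_mul_centralBinom k h
      _ ≤ (2 * k + 2) * Nat.centralBinom k := by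
          exact Nat.mul_le_mul_right _ (by omega)

theorem catalan_pos (k : ℕ) : 0 < catalan k := by
  have h := succ_mul_catalan_eq_centralBinom k
  have h2 := Nat.centralBinom_pos k
  rcases Nat.eq_zero_or_pos (catalan k) with h0 | h0
  · simp [h0] at h; omega
  · exact h0

theorem surj_ev {α : Type*} {G : Set (FreeMagma α)} {x : FreeMagma α}
    (hx : x ∈ Subsemigroup.closure G) :
    ∃ w : FreeMagma ↥G, ev Subtype.val w = x := by
  induction hx using Subsemigroup.closure_induction with
  | mem g hg => exact ⟨.of ⟨g, hg⟩, rfl⟩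
  | mul x y hx hy ihx ihy =>
    obtain ⟨w1, h1⟩ := ihx
    obtain ⟨w2, h2⟩ := ihy
    exact ⟨w1 * w2, by rw [← h1, ← h2]; rfl⟩

theorem cntLe_univ_ge (k : ℕ) :
    catalan k ≤ cntLe (Set.univ : Set (FreeMagma Unit)) (k + 1) := by
  haveI : Finite {x : FreeMagma Unit // x ∈ Set.univ ∧ x.len ≤ k + 1} := finite_lenLe _ _
  have hinj : Function.Injective (fun t : {t : Tree Unit // t ∈ Tree.treesOfNumNodesEq k} =>
      (⟨toFM t.1, ⟨trivial, by
        rw [len_toFM, show Tree.numNodes t.1 = k from BinaryTree.mem_treesOfNumNodesEq.mp t.2]⟩⟩ :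
        {x : FreeMagma Unit // x ∈ Set.univ ∧ x.len ≤ k + 1})) := by
    intro a b h
    exact Subtype.ext (toFM_inj (congrArg Subtype.val h))
  calc catalan k = Nat.card {t : Tree Unit // t ∈ Tree.treesOfNumNodesEq k} := by
        rw [Nat.card_eq_finsetCard, BinaryTree.treesOfNumNodesEq_card_eq_catalan]
    _ ≤ _ := Nat.card_le_card_of_injective _ hinj

theorem cntLe_N_le {G : Set (FreeMagma Unit)} [Inhabited ↥G] [Finite ↥G]
    (hG2 : ∀ g : ↥G, 2 ≤ (g : FreeMagma Unit).len) (n : ℕ) :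
    cntLe (Subsemigroup.closure G : Set (FreeMagma Unit)) n
      ≤ ((n + 1) * 2 ^ n) * ((n / 2 + 1) * Nat.card ↥G ^ (n / 2)) := by
  classical
  set D := {x : FreeMagma Unit // x ∈ (Subsemigroup.closure G : Set (FreeMagma Unit)) ∧ x.len ≤ n}
  have hw : ∀ x : D, ∃ w : FreeMagma ↥G, ev Subtype.val w = x.1 := fun x => surj_ev x.2.1
  set w : D → FreeMagma ↥G := fun x => (hw x).choose with hwdef
  have hwx : ∀ x : D, ev Subtype.val (w x) = x.1 := fun x => (hw x).choose_spec
  have hlen : ∀ x : D, 2 * (w x).len ≤ n := by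
    intro x
    calc 2 * (w x).len ≤ (ev Subtype.val (w x)).len := len_ev _ hG2 _
      _ = x.1.len := by rw [hwx]
      _ ≤ n := x.2.2
  have hF : Function.Injective (fun x : D =>
      (padEnc n ⟨shape (w x), by
          have h1 := length_shape (w x); have h2 := hlen x; omega⟩,
       padEnc (n / 2) ⟨leaves (w x), by
          rw [length_leaves]
          have h2 := hlen x; omega⟩)) := by
    intro a b h
    simp only [Prod.mk.injEq] at h
    have h1 := congrArg Subtype.val (padEnc_inj _ h.1)
    have h2 := congrArg Subtype.val (padEnc_inj _ h.2)
    have : w a = w b := shape_leaves_inj h1 h2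
    apply Subtype.ext
    rw [← hwx a, ← hwx b, this]
  calc cntLe _ n = Nat.card D := rfl
    _ ≤ Nat.card ((Fin (n + 1) × (Fin n → Bool)) × (Fin (n / 2 + 1) × (Fin (n / 2) → ↥G))) :=
        Nat.card_le_card_of_injective _ hF
    _ = ((n + 1) * 2 ^ n) * ((n / 2 + 1) * Nat.card ↥G ^ (n / 2)) := by
        haveI : Fintype ↥G := Fintype.ofFinite _
        simp only [Nat.card_prod, Nat.card_fun, Nat.card_eq_fintype_card, Fintype.card_fin,
          Fintype.card_bool]
        simp [Fintype.card_prod, Fintype.card_fun]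

end Aux11

theorem stmt_11 (N : Subsemigroup (FreeMagma Unit)) (hproper : N ≠ ⊤)
    (hne : (N : Set (FreeMagma Unit)).Nonempty)
    (G : Set (FreeMagma Unit)) (hgen : Subsemigroup.closure G = N)
    (hmin : ∀ G' : Set (FreeMagma Unit), Subsemigroup.closure G' = N → G ⊆ G')
    (hfin : G.Finite) (hrk : G.ncard ≤ 3) :
    Tendsto (fun n =>
        (cntLe (N : Set (FreeMagma Unit)) n : ℝ) /
          (cntLe (Set.univ : Set (FreeMagma Unit)) n : ℝ))
      atTop (nhds 0) := by
  classical
  have hx1 : FreeMagma.of () ∉ N := by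
    intro h
    apply hproper
    have hle : Subsemigroup.closure {FreeMagma.of ()} ≤ N :=
      Subsemigroup.closure_le.mpr (by simpa using h)
    rw [Aux11.closure_of_top] at hle
    exact top_le_iff.mp hle
  have hmem2 : ∀ x ∈ N, 2 ≤ x.len := by
    intro x hx
    cases x with
    | of a => cases a; exact absurd hx hx1
    | mul x y =>
      have h1 := Aux11.len_pos x
      have h2 := Aux11.len_pos y
      have : (x.mul y).len = x.len + y.len := rfl
      omega
  have hGsub : G ⊆ (N : Set (FreeMagma Unit)) := hgen ▸ Subsemigroup.subset_closure
  have hG2 : ∀ g : ↥G, 2 ≤ (g : FreeMagma Unit).len := fun g => hmem2 _ (hGsub g.2)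
  haveI hGfin : Finite ↥G := hfin
  obtain ⟨x0, hx0⟩ := hne
  obtain ⟨w0, -⟩ := Aux11.surj_ev (G := G) (x := x0) (by rw [hgen]; exact hx0)
  have hA : Nonempty ↥G := by
    clear hx0
    induction w0 with
    | ih1 a => exact ⟨a⟩
    | ih2 x y ihx ihy => exact ihx
  letI : Inhabited ↥G := Classical.inhabited_of_nonempty hA
  have hcard : Nat.card ↥G ≤ 3 := by rw [Nat.card_coe_set_eq]; exact hrk
  have hub : ∀ n, cntLe (N : Set (FreeMagma Unit)) n ≤
      ((n + 1) * 2 ^ n) * ((n / 2 + 1) * 3 ^ (n / 2)) := by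
    intro n
    have h := Aux11.cntLe_N_le hG2 n
    rw [hgen] at h
    refine le_trans h ?_
    gcongr
  have hlb : ∀ k, catalan k ≤ cntLe (Set.univ : Set (FreeMagma Unit)) (k + 1) :=
    Aux11.cntLe_univ_ge
  set r : ℝ := Real.sqrt 3 / 2 with hrdef
  have hs3 : (0:ℝ) ≤ Real.sqrt 3 := Real.sqrt_nonneg 3
  have hs3' : Real.sqrt 3 ^ 2 = 3 := Real.sq_sqrt (by norm_num)
  have hs3one : (1:ℝ) ≤ Real.sqrt 3 := by nlinarith
  have hr0 : 0 ≤ r := by positivity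
  have hr1 : r < 1 := by
    rw [hrdef, div_lt_one (by norm_num)]
    nlinarith
  have key : ∀ k : ℕ, (cntLe (N : Set (FreeMagma Unit)) (k + 1) : ℝ) /
      (cntLe (Set.univ : Set (FreeMagma Unit)) (k + 1) : ℝ) ≤
        128 * ((k:ℝ) + 1) ^ 4 * r ^ (k + 1) := by
    intro k
    set n := k + 1 with hn
    set m := n / 2 with hm
    have hcatpos : (0:ℝ) < (catalan k : ℝ) := by exact_mod_cast Aux11.catalan_pos k
    have hbcat : ((catalan k : ℝ)) ≤ (cntLe (Set.univ : Set (FreeMagma Unit)) n : ℝ) := by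
      exact_mod_cast hlb k
    have hbpos : (0:ℝ) < (cntLe (Set.univ : Set (FreeMagma Unit)) n : ℝ) :=
      lt_of_lt_of_le hcatpos hbcat
    rw [div_le_iff₀ hbpos]
    have ha : (cntLe (N : Set (FreeMagma Unit)) n : ℝ) ≤
        (((n:ℝ) + 1) * 2 ^ n) * (((m:ℝ) + 1) * 3 ^ m) := by
      have := hub n
      rw [← hm] at this
      exact_mod_cast this
    have hcat : (4:ℝ) ^ k ≤ (2 * (k:ℝ) + 2) * (((k:ℝ) + 1) * (catalan k : ℝ)) := by
      exact_mod_cast Aux11.cat_lb k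
    set C : ℝ := 128 * ((k:ℝ) + 1) ^ 4 * r ^ (k + 1) with hC
    have hC0 : 0 ≤ C := by positivity
    set d : ℝ := (2 * (k:ℝ) + 2) * ((k:ℝ) + 1) with hd
    have hd0 : (0:ℝ) < d := by positivity
    have h3m : (3:ℝ) ^ m ≤ Real.sqrt 3 ^ n := by
      have h2m : 2 * m ≤ n := Nat.mul_div_le n 2 |>.trans_eq rfl
      calc (3:ℝ) ^ m = (Real.sqrt 3 ^ 2) ^ m := by rw [hs3']
        _ = Real.sqrt 3 ^ (2 * m) := by rw [← pow_mul]
        _ ≤ Real.sqrt 3 ^ n := pow_le_pow_right₀ hs3one h2m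
    have hmn : m ≤ n := Nat.div_le_self n 2
    have hpolyN : (n + 1) * (m + 1) * ((2 * k + 2) * (k + 1)) ≤ 32 * n ^ 4 := by
      have h1 : 1 ≤ n := Nat.le_add_left 1 k
      have e1 : 2 * k + 2 = 2 * n := by omega
      have e2 : k + 1 = n := by omega
      rw [e1, e2]
      calc (n + 1) * (m + 1) * (2 * n * n) ≤ (2 * n) * (2 * n) * (2 * n * n) := by
            gcongr <;> omega
        _ = 8 * n ^ 4 := by ring
        _ ≤ 32 * n ^ 4 := Nat.mul_le_mul_right _ (by norm_num)
    have hpoly : ((n:ℝ) + 1) * ((m:ℝ) + 1) * d ≤ 32 * (n:ℝ) ^ 4 := by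
      rw [hd]
      have : ((2:ℝ) * k + 2) * ((k:ℝ) + 1) = (((2 * k + 2) * (k + 1) : ℕ) : ℝ) := by push_cast; ring
      rw [this]
      exact_mod_cast hpolyN
    have h4 : (4:ℝ) ^ k * 4 = 2 ^ n * 2 ^ n := by
      have : (4:ℝ) ^ n = 2 ^ n * 2 ^ n := by
        rw [← mul_pow]; norm_num
      rw [← this, hn, pow_succ]
    have hmain : ((((n:ℝ) + 1) * 2 ^ n) * (((m:ℝ) + 1) * 3 ^ m)) * d ≤ C * 4 ^ k := by
      calc ((((n:ℝ) + 1) * 2 ^ n) * (((m:ℝ) + 1) * 3 ^ m)) * d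
          = (((n:ℝ) + 1) * ((m:ℝ) + 1) * d) * (2 ^ n * 3 ^ m) := by ring
        _ ≤ (((n:ℝ) + 1) * ((m:ℝ) + 1) * d) * (2 ^ n * Real.sqrt 3 ^ n) := by
            have hnn : (0:ℝ) ≤ ((n:ℝ) + 1) * ((m:ℝ) + 1) * d := by positivity
            gcongr
        _ ≤ (32 * (n:ℝ) ^ 4) * (2 ^ n * Real.sqrt 3 ^ n) := by
            have hnn : (0:ℝ) ≤ 2 ^ n * Real.sqrt 3 ^ n := by positivity
            exact mul_le_mul_of_nonneg_right hpoly hnn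
        _ = C * 4 ^ k := by
            rw [hC, hrdef, div_pow]
            have hcn : ((k:ℝ) + 1) ^ 4 = (n:ℝ) ^ 4 := by rw [hn]; push_cast; ring
            rw [hcn, show (4:ℝ) ^ k = 2 ^ k * 2 ^ k from by rw [← mul_pow]; norm_num,
              show n = k + 1 from hn]
            have h2 : (2:ℝ) ^ (k + 1) ≠ 0 := by positivity
            field_simp
            ring
    have hcat' : (4:ℝ) ^ k / d ≤ (catalan k : ℝ) := by
      rw [div_le_iff₀ hd0]
      calc (4:ℝ) ^ k ≤ (2 * (k:ℝ) + 2) * (((k:ℝ) + 1) * (catalan k : ℝ)) := hcat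
        _ = (catalan k : ℝ) * d := by rw [hd]; ring
    calc (cntLe (N : Set (FreeMagma Unit)) n : ℝ)
        ≤ (((n:ℝ) + 1) * 2 ^ n) * (((m:ℝ) + 1) * 3 ^ m) := ha
      _ = ((((n:ℝ) + 1) * 2 ^ n) * (((m:ℝ) + 1) * 3 ^ m)) * d / d := by field_simp
      _ ≤ (C * 4 ^ k) / d := by gcongr
      _ = C * (4 ^ k / d) := by ring
      _ ≤ C * (catalan k : ℝ) := by gcongr
      _ ≤ C * (cntLe (Set.univ : Set (FreeMagma Unit)) n : ℝ) := by gcongr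
  have htend : Tendsto (fun n : ℕ => 128 * (n:ℝ) ^ 4 * r ^ n) atTop (nhds 0) := by
    have h := (tendsto_pow_const_mul_const_pow_of_lt_one 4 hr0 hr1).const_mul (128:ℝ)
    simpa [mul_assoc] using h
  refine tendsto_of_tendsto_of_tendsto_of_le_of_le' tendsto_const_nhds htend ?_ ?_
  · exact Eventually.of_forall fun n => div_nonneg (Nat.cast_nonneg _) (Nat.cast_nonneg _)
  · refine eventually_atTop.mpr ⟨1, fun n hn => ?_⟩
    obtain ⟨k, rfl⟩ := Nat.exists_eq_add_of_le hn
    have := key k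
    rw [add_comm 1 k]
    convert this using 3
    · rfl
    push_cast
    ring
end

section
/- For any positive integer p, lim_{n→∞} C_{np−1} / (C_{p−1} + C_{2p−1} + ⋯ + C_{np−1}) = 1 − 1/4^p, where C_k denotes the k-th Catalan number. -/
open Filter Finset Asymptotics

lemma my_catalan_pos (n : ℕ) : 0 < catalan n := by
  rcases Nat.eq_zero_or_pos (catalan n) with h | h
  · exfalso
    have key := succ_mul_catalan_eq_centralBinom n
    rw [h, Nat.mul_zero] at key
    exact (Nat.centralBinom_pos n).ne' key.symm
  · exact h

lemma my_catalan_rec (n : ℕ) :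
    (n + 2) * catalan (n + 1) = 2 * (2 * n + 1) * catalan n := by
  have h1 := succ_mul_catalan_eq_centralBinom (n + 1)
  have h2 := Nat.succ_mul_centralBinom_succ n
  have h3 := succ_mul_catalan_eq_centralBinom n
  have key : (n + 1) * ((n + 2) * catalan (n + 1))
      = (n + 1) * (2 * (2 * n + 1) * catalan n) := by
    calc (n + 1) * ((n + 2) * catalan (n + 1))
        = (n + 1) * ((n + 1 + 1) * catalan (n + 1)) := by ring_nf
      _ = (n + 1) * Nat.centralBinom (n + 1) := by rw [h1]
      _ = 2 * (2 * n + 1) * Nat.centralBinom n := h2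
      _ = 2 * (2 * n + 1) * ((n + 1) * catalan n) := by rw [h3]
      _ = (n + 1) * (2 * (2 * n + 1) * catalan n) := by ring
  exact Nat.eq_of_mul_eq_mul_left (Nat.succ_pos n) key

lemma my_catalan_ratio (n : ℕ) :
    (catalan (n + 1) : ℝ) / catalan n = 2 * (2 * n + 1) / (n + 2) := by
  have h := my_catalan_rec n
  have hc : (catalan n : ℝ) ≠ 0 := Nat.cast_ne_zero.2 (my_catalan_pos n).ne'
  have h' : ((n : ℝ) + 2) * catalan (n + 1) = 2 * (2 * n + 1) * catalan n := by
    exact_mod_cast congrArg (Nat.cast : ℕ → ℝ) h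
  have hn2 : ((n : ℝ) + 2) ≠ 0 := by positivity
  field_simp
  linarith [h']

lemma my_ratio_tendsto :
    Tendsto (fun n : ℕ => (catalan (n + 1) : ℝ) / catalan n) atTop (nhds 4) := by
  have h0 : Tendsto (fun n : ℕ => (6 : ℝ) / ((n : ℝ) + 2)) atTop (nhds 0) :=
    Tendsto.div_atTop tendsto_const_nhds
      (tendsto_atTop_add_const_right _ 2 tendsto_natCast_atTop_atTop)
  have h1 : Tendsto (fun n : ℕ => 4 - (6 : ℝ) / ((n : ℝ) + 2)) atTop (nhds 4) := by
    simpa using tendsto_const_nhds.sub h0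
  refine h1.congr fun n => ?_
  rw [my_catalan_ratio]
  have hn2 : ((n : ℝ) + 2) ≠ 0 := by positivity
  field_simp
  ring

lemma my_catalan_prod (m q : ℕ) :
    (∏ j ∈ range q, (catalan (m + j + 1) : ℝ) / catalan (m + j))
      = (catalan (m + q) : ℝ) / catalan m := by
  induction q with
  | zero =>
    simp [div_self (Nat.cast_ne_zero.2 (my_catalan_pos m).ne' : (catalan m : ℝ) ≠ 0)]
  | succ q ih =>
    rw [prod_range_succ, ih]
    have h1 : (catalan (m + q) : ℝ) ≠ 0 := Nat.cast_ne_zero.2 (my_catalan_pos _).ne'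
    have h2 : (catalan m : ℝ) ≠ 0 := Nat.cast_ne_zero.2 (my_catalan_pos _).ne'
    have : m + (q + 1) = m + q + 1 := rfl
    rw [this]
    field_simp

theorem stmt_12 (p : ℕ) (hp : 0 < p) :
    Tendsto (fun n => (catalan (n * p - 1) : ℝ) /
        (∑ k ∈ Finset.Icc 1 n, (catalan (k * p - 1) : ℝ)))
      atTop (nhds (1 - 1 / 4 ^ p)) := by
  set a : ℕ → ℝ := fun k => (catalan (k * p - 1) : ℝ) with ha
  have hapos : ∀ k, 0 < a k := fun k => by
    simp only [ha]; exact_mod_cast my_catalan_pos _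
  have ha1 : ∀ k, 1 ≤ a k := fun k => by
    simp only [ha]; exact_mod_cast my_catalan_pos _
  set G : ℕ → ℝ := fun n => ∑ i ∈ range n, a (i + 1) with hG
  set T : ℕ → ℝ := fun n => ∑ i ∈ range n, a i with hT
  have h4ne : ((4 : ℝ) ^ p) ≠ 0 := by positivity
  -- the Icc sum equals G
  have hSG : ∀ n, (∑ k ∈ Finset.Icc 1 n, a k) = G n := by
    intro n
    rw [show Finset.Icc 1 n = Finset.Ico 1 (n + 1) by rw [Finset.Ico_add_one_right_eq_Icc],
      Finset.sum_Ico_eq_sum_range]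
    simp only [hG, Nat.add_sub_cancel]
    exact Finset.sum_congr rfl fun i _ => by rw [Nat.add_comm]
  -- T (n+1) = 1 + G n
  have ha0 : a 0 = 1 := by simp [ha]
  have hTsucc : ∀ n, T (n + 1) = 1 + G n := by
    intro n
    show (∑ i ∈ range (n + 1), a i) = 1 + G n
    rw [Finset.sum_range_succ', ha0, add_comm]
  -- ratio tendsto 4^p
  have hratio : Tendsto (fun n => a (n + 1) / a n) atTop (nhds ((4 : ℝ) ^ p)) := by
    have hprod : Tendsto (fun n : ℕ => ∏ j ∈ range p,
        (catalan (n * p - 1 + j + 1) : ℝ) / catalan (n * p - 1 + j))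
        atTop (nhds ((4 : ℝ) ^ p)) := by
      have h4p : ((4 : ℝ) ^ p) = ∏ _j ∈ range p, (4 : ℝ) := by simp
      rw [h4p]
      apply tendsto_finset_prod
      intro j _
      have hcomp : Tendsto (fun n : ℕ => n * p - 1 + j) atTop atTop := by
        apply tendsto_atTop_mono (fun n => ?_) (tendsto_sub_atTop_nat 1)
        have : n ≤ n * p := Nat.le_mul_of_pos_right n hp
        omega
      exact my_ratio_tendsto.comp hcomp
    refine Tendsto.congr' ?_ hprod
    filter_upwards [eventually_ge_atTop 1] with n hn
    rw [my_catalan_prod]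
    have hnp : 1 ≤ n * p := Nat.one_le_iff_ne_zero.2 (Nat.mul_ne_zero (by omega) hp.ne')
    have harg : n * p - 1 + p = (n + 1) * p - 1 := by
      rw [Nat.succ_mul]
      omega
    rw [harg]
  -- inverse ratio
  have hinv : Tendsto (fun n => a n / a (n + 1)) atTop (nhds (((4 : ℝ) ^ p)⁻¹)) := by
    have h := hratio.inv₀ h4ne
    refine h.congr fun n => ?_
    rw [inv_div]
  -- G → ∞
  have hG_atTop : Tendsto G atTop atTop := by
    apply tendsto_atTop_mono (fun n => ?_) tendsto_natCast_atTop_atTop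
    calc (n : ℝ) = ∑ _i ∈ range n, (1 : ℝ) := by simp
      _ ≤ G n := Finset.sum_le_sum fun i _ => ha1 _
  -- little-o
  have hlittle : (fun k => a (k + 1) - (4 : ℝ) ^ p * a k) =o[atTop] (fun k => a (k + 1)) := by
    rw [isLittleO_iff_tendsto (fun k hk => absurd hk (hapos (k + 1)).ne')]
    have h2 : Tendsto (fun k => 1 - (4 : ℝ) ^ p * (a k / a (k + 1))) atTop
        (nhds (1 - 4 ^ p * ((4 : ℝ) ^ p)⁻¹)) :=
      tendsto_const_nhds.sub (tendsto_const_nhds.mul hinv)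
    have h0 : (1 : ℝ) - 4 ^ p * ((4 : ℝ) ^ p)⁻¹ = 0 := by
      rw [mul_inv_cancel₀ h4ne]; ring
    rw [h0] at h2
    refine h2.congr fun k => ?_
    have hne := (hapos (k + 1)).ne'
    field_simp
  have hsum : (fun n => ∑ i ∈ range n, (a (i + 1) - (4 : ℝ) ^ p * a i))
      =o[atTop] (fun n => ∑ i ∈ range n, a (i + 1)) :=
    hlittle.sum_range (fun i => (hapos (i + 1)).le) hG_atTop
  have hFeq : ∀ n, (∑ i ∈ range n, (a (i + 1) - (4 : ℝ) ^ p * a i))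
      = G n - 4 ^ p * T n := by
    intro n
    rw [Finset.sum_sub_distrib, ← Finset.mul_sum]
  -- T/G → (4^p)⁻¹
  have hTG : Tendsto (fun n => T n / G n) atTop (nhds (((4 : ℝ) ^ p)⁻¹)) := by
    have hdiv : Tendsto (fun n => (G n - 4 ^ p * T n) / G n) atTop (nhds 0) := by
      have h := hsum.tendsto_div_nhds_zero
      simp only [hFeq] at h
      exact h
    have h2 : Tendsto (fun n => 1 - 4 ^ p * (T n / G n)) atTop (nhds 0) := by
      refine Tendsto.congr' ?_ hdiv
      filter_upwards [hG_atTop.eventually_gt_atTop 0] with n hn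
      field_simp
    have h3 : Tendsto (fun n => (4 : ℝ) ^ p * (T n / G n)) atTop (nhds 1) := by
      have h3' := (tendsto_const_nhds (x := (1 : ℝ))).sub h2
      simpa using h3'
    have h4 : Tendsto (fun n => ((4 : ℝ) ^ p)⁻¹ * ((4 : ℝ) ^ p * (T n / G n))) atTop
        (nhds (((4 : ℝ) ^ p)⁻¹ * 1)) := h3.const_mul _
    simpa [inv_mul_cancel_left₀ h4ne] using h4
  -- final limit
  have hfinal : Tendsto (fun n => a n / G n) atTop (nhds (1 - 1 / 4 ^ p)) := by
    have h5 : Tendsto (fun n => 1 / G n + 1 - T n / G n) atTop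
        (nhds (0 + 1 - ((4 : ℝ) ^ p)⁻¹)) :=
      ((Tendsto.div_atTop tendsto_const_nhds hG_atTop).add tendsto_const_nhds).sub hTG
    have heq : (0 : ℝ) + 1 - ((4 : ℝ) ^ p)⁻¹ = 1 - 1 / 4 ^ p := by
      rw [one_div]; ring
    rw [heq] at h5
    refine Tendsto.congr' ?_ h5
    filter_upwards [hG_atTop.eventually_gt_atTop 0] with n hGn
    have h6 : T (n + 1) = T n + a n := Finset.sum_range_succ _ n
    have han : a n = 1 + G n - T n := by
      have := hTsucc n
      linarith
    rw [han]
    field_simp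
  refine hfinal.congr fun n => ?_
  rw [← hSG n]
end

section
/- For any positive integer p and any residue r with 0 ≤ r ≤ p−1, writing L_p = {x ∈ M : p divides ℓ(x)}, we have lim_{k→∞} |L_p|_{≤ pk+r} / |M|_{≤ pk+r} = 3 / (4^{r+1}(1 − 1/4^p)). -/
open Filter
open Finset

namespace Stmt13Aux

def toTree : FreeMagma Unit → Tree Unit
  | FreeMagma.of _ => Tree.nil
  | FreeMagma.mul x y => Tree.node () (toTree x) (toTree y)

def ofTree : Tree Unit → FreeMagma Unit
  | BinaryTree.nil => FreeMagma.of ()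
  | BinaryTree.node _ l r => FreeMagma.mul (ofTree l) (ofTree r)

lemma toTree_ofTree : ∀ t, toTree (ofTree t) = t
  | BinaryTree.nil => rfl
  | BinaryTree.node _ l r => by simp [ofTree, toTree, toTree_ofTree l, toTree_ofTree r]

lemma ofTree_toTree : ∀ x, ofTree (toTree x) = x
  | FreeMagma.of _ => rfl
  | FreeMagma.mul x y => by simp [ofTree, toTree, ofTree_toTree x, ofTree_toTree y]

def magmaEquivTree : FreeMagma Unit ≃ Tree Unit :=
  ⟨toTree, ofTree, ofTree_toTree, toTree_ofTree⟩

lemma len_eq_numNodes : ∀ x : FreeMagma Unit, x.len = (toTree x).numNodes + 1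
  | FreeMagma.of _ => rfl
  | FreeMagma.mul x y => by
      simp [FreeMagma.len, toTree, Tree.numNodes, len_eq_numNodes x, len_eq_numNodes y]; ring

lemma len_pos : ∀ x : FreeMagma Unit, 0 < x.len
  | FreeMagma.of _ => Nat.one_pos
  | FreeMagma.mul x y => by simp [FreeMagma.len]; have := len_pos x; omega

lemma card_len (n : ℕ) : Nat.card {x : FreeMagma Unit // x.len = n + 1} = catalan n := by
  have e : {x : FreeMagma Unit // x.len = n + 1} ≃ {t : Tree Unit // t ∈ Tree.treesOfNumNodesEq n} :=
    Equiv.subtypeEquiv magmaEquivTree (by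
      intro x
      show x.len = n + 1 ↔ toTree x ∈ Tree.treesOfNumNodesEq n
      simp only [magmaEquivTree, Equiv.coe_fn_mk, BinaryTree.mem_treesOfNumNodesEq, len_eq_numNodes x, Tree.numNodes]
      exact ⟨fun h => by omega, fun h => by omega⟩)
  rw [Nat.card_congr e, Nat.card_eq_fintype_card, Fintype.card_coe,
    BinaryTree.treesOfNumNodesEq_card_eq_catalan]

lemma finite_tree_le (n : ℕ) : {t : Tree Unit | t.numNodes ≤ n}.Finite := by
  apply Set.Finite.subset ((range (n+1)).biUnion Tree.treesOfNumNodesEq).finite_toSet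
  intro t ht
  simp only [coe_biUnion, Set.mem_iUnion, mem_coe, BinaryTree.mem_treesOfNumNodesEq, mem_range]
  exact ⟨t.numNodes, Nat.lt_succ_of_le ht, rfl⟩

lemma finite_le (n : ℕ) : {x : FreeMagma Unit | x.len ≤ n}.Finite := by
  have h := (finite_tree_le n).preimage (f := toTree)
    (magmaEquivTree.injective.injOn)
  apply Set.Finite.subset h
  intro x hx
  simp only [Set.mem_preimage, Set.mem_setOf_eq] at *
  have := len_eq_numNodes x; omega

instance fin_sub {X : Set (FreeMagma Unit)} {n : ℕ} :
    Finite {x : FreeMagma Unit // x ∈ X ∧ x.len ≤ n} := by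
  have : {x : FreeMagma Unit | x ∈ X ∧ x.len ≤ n}.Finite :=
    (finite_le n).subset (fun x hx => hx.2)
  exact this.to_subtype

lemma finite_mem_le {X : Set (FreeMagma Unit)} {n : ℕ} :
    {x : FreeMagma Unit | x ∈ X ∧ x.len ≤ n}.Finite :=
  (finite_le n).subset (fun x hx => hx.2)

lemma finite_mem_eq {X : Set (FreeMagma Unit)} {n : ℕ} :
    {x : FreeMagma Unit | x ∈ X ∧ x.len = n}.Finite :=
  (finite_le n).subset (fun x hx => le_of_eq hx.2)

lemma cntLe_zero (X : Set (FreeMagma Unit)) : cntLe X 0 = 0 := by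
  have : IsEmpty {x : FreeMagma Unit // x ∈ X ∧ x.len ≤ 0} := by
    constructor; rintro ⟨x, -, hx⟩; have := len_pos x; omega
  exact @Nat.card_of_isEmpty _ this

lemma cntLe_succ (X : Set (FreeMagma Unit)) (n : ℕ) :
    cntLe X (n + 1) = cntLe X n + cnt X (n + 1) := by
  have h1 : cntLe X (n+1) = ({x : FreeMagma Unit | x ∈ X ∧ x.len ≤ n + 1}).ncard :=
    Nat.card_coe_set_eq _
  have h2 : cntLe X n = ({x : FreeMagma Unit | x ∈ X ∧ x.len ≤ n}).ncard :=
    Nat.card_coe_set_eq _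
  have h3 : cnt X (n+1) = ({x : FreeMagma Unit | x ∈ X ∧ x.len = n + 1}).ncard :=
    Nat.card_coe_set_eq _
  rw [h1, h2, h3]
  have hU : {x : FreeMagma Unit | x ∈ X ∧ x.len ≤ n + 1} =
      {x : FreeMagma Unit | x ∈ X ∧ x.len ≤ n} ∪ {x : FreeMagma Unit | x ∈ X ∧ x.len = n + 1} := by
    ext x; simp only [Set.mem_setOf_eq, Set.mem_union]
    constructor
    · rintro ⟨hm, hl⟩
      rcases Nat.lt_or_ge x.len (n+1) with h | h
      · exact Or.inl ⟨hm, by omega⟩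
      · exact Or.inr ⟨hm, by omega⟩
    · rintro (⟨hm, hl⟩ | ⟨hm, hl⟩) <;> exact ⟨hm, by omega⟩
  rw [hU, Set.ncard_union_eq ?_ finite_mem_le finite_mem_eq]
  rw [Set.disjoint_left]
  rintro x ⟨-, h1⟩ ⟨-, h2⟩; omega

lemma cntLe_eq_sum (X : Set (FreeMagma Unit)) (n : ℕ) :
    cntLe X n = ∑ m ∈ range n, cnt X (m + 1) := by
  induction n with
  | zero => simp [cntLe_zero]
  | succ n ih => rw [cntLe_succ, ih, sum_range_succ]


lemma cnt_univ (m : ℕ) : cnt (Set.univ : Set (FreeMagma Unit)) (m + 1) = catalan m := by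
  have e : {x : FreeMagma Unit // x ∈ (Set.univ : Set (FreeMagma Unit)) ∧ x.len = m + 1} ≃
      {x : FreeMagma Unit // x.len = m + 1} :=
    Equiv.subtypeEquivRight (by simp)
  rw [cnt, Nat.card_congr e, card_len]

lemma cnt_nondvd {p m : ℕ} (h : ¬ p ∣ m) : cnt {x : FreeMagma Unit | p ∣ x.len} m = 0 := by
  have : IsEmpty {x : FreeMagma Unit // x ∈ {x : FreeMagma Unit | p ∣ x.len} ∧ x.len = m} := by
    constructor; rintro ⟨x, hd, hx⟩
    exact h (hx ▸ hd)
  exact @Nat.card_of_isEmpty _ this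

lemma cnt_dvd {p : ℕ} (hp : 0 < p) (j : ℕ) :
    cnt {x : FreeMagma Unit | p ∣ x.len} (p * (j + 1)) = catalan (p * (j + 1) - 1) := by
  have e : {x : FreeMagma Unit // x ∈ {x : FreeMagma Unit | p ∣ x.len} ∧ x.len = p * (j + 1)} ≃
      {x : FreeMagma Unit // x.len = p * (j + 1)} :=
    Equiv.subtypeEquivRight (by
      intro x
      simp only [Set.mem_setOf_eq]
      constructor
      · rintro ⟨-, h⟩; exact h
      · intro h; exact ⟨h ▸ ⟨j + 1, rfl⟩, h⟩)
  have hpos : 0 < p * (j + 1) := by positivity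
  obtain ⟨n, hn⟩ : ∃ n, p * (j + 1) = n + 1 := ⟨p * (j + 1) - 1, by omega⟩
  rw [cnt, Nat.card_congr e, hn, card_len]
  simp

lemma denom_eq (n : ℕ) :
    cntLe (Set.univ : Set (FreeMagma Unit)) n = ∑ m ∈ range n, catalan m := by
  rw [cntLe_eq_sum]
  exact sum_congr rfl fun m _ => cnt_univ m

lemma numer_eq {p r : ℕ} (hp : 0 < p) (hr : r < p) (k : ℕ) :
    cntLe {x : FreeMagma Unit | p ∣ x.len} (p * k + r) =
      ∑ j ∈ range k, catalan (p * (j + 1) - 1) := by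
  rw [cntLe_eq_sum]
  induction k with
  | zero =>
    simp only [Nat.mul_zero, Nat.zero_add, range_zero, sum_empty]
    apply sum_eq_zero
    intro m hm
    rw [mem_range] at hm
    exact cnt_nondvd (fun hd => by have := Nat.le_of_dvd (by omega) hd; omega)
  | succ k ih =>
    have hle : p * k + r ≤ p * (k + 1) + r := by
      have : p * k ≤ p * (k + 1) := Nat.mul_le_mul_left p (by omega)
      omega
    have hd : p * (k + 1) + r - (p * k + r) = p := by
      rw [Nat.mul_succ]; omega
    have h2 : ∑ i ∈ Ico (p * k + r) (p * (k + 1) + r), cnt {x : FreeMagma Unit | p ∣ x.len} (i + 1)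
        = ∑ i ∈ range p, cnt {x : FreeMagma Unit | p ∣ x.len} (p * k + r + i + 1) := by
      rw [Finset.sum_Ico_eq_sum_range, hd]
    have hsplit : ∑ m ∈ range (p * (k + 1) + r), cnt {x : FreeMagma Unit | p ∣ x.len} (m + 1)
        = (∑ m ∈ range (p * k + r), cnt {x : FreeMagma Unit | p ∣ x.len} (m + 1)) +
          ∑ i ∈ range p, cnt {x : FreeMagma Unit | p ∣ x.len} (p * k + r + i + 1) := by
      rw [← h2, range_eq_Ico, ← Finset.sum_Ico_consecutive _ (Nat.zero_le (p * k + r)) hle, range_eq_Ico]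
    rw [hsplit, ih, sum_range_succ]
    congr 1
    rw [Finset.sum_eq_single_of_mem (p - r - 1) (mem_range.mpr (by omega))]
    · have hidx : p * k + r + (p - r - 1) + 1 = p * (k + 1) := by
        rw [Nat.mul_succ]; omega
      rw [hidx, cnt_dvd hp k]
    · intro i hi hne
      rw [mem_range] at hi
      apply cnt_nondvd
      intro hdvd
      have h1 : p * k + r + i + 1 = p * k + (r + i + 1) := by omega
      rw [h1] at hdvd
      have h2 : p ∣ (r + i + 1) := (Nat.dvd_add_right (dvd_mul_right p k)).mp hdvd
      obtain ⟨c, hc⟩ := h2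
      have hc1 : c = 1 := by
        rcases Nat.lt_or_ge c 1 with h | h
        · have hc0 : c = 0 := by omega
          rw [hc0, Nat.mul_zero] at hc; omega
        rcases Nat.lt_or_ge c 2 with h2 | h2
        · omega
        · exfalso
          have hmul : p * 2 ≤ p * c := Nat.mul_le_mul_left p h2
          have hp2 : p * 2 = p + p := by ring
          omega
      rw [hc1, Nat.mul_one] at hc
      omega



lemma catalan_pos' (n : ℕ) : 0 < catalan n := by
  by_contra h
  push_neg at h
  have h0 : catalan n = 0 := by omega
  have h1 := succ_mul_catalan_eq_centralBinom n
  rw [h0, Nat.mul_zero] at h1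
  exact (Nat.centralBinom_pos n).ne' h1.symm

lemma catalan_rec (n : ℕ) : (n + 2) * catalan (n + 1) = 2 * (2 * n + 1) * catalan n := by
  have h1 := succ_mul_catalan_eq_centralBinom (n + 1)
  have h2 := Nat.succ_mul_centralBinom_succ n
  have h3 := succ_mul_catalan_eq_centralBinom n
  apply Nat.eq_of_mul_eq_mul_left (show 0 < n + 1 by omega)
  calc (n + 1) * ((n + 2) * catalan (n + 1))
      = (n + 1) * ((n + 1 + 1) * catalan (n + 1)) := rfl
    _ = (n + 1) * Nat.centralBinom (n + 1) := by rw [h1]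
    _ = 2 * (2 * n + 1) * Nat.centralBinom n := h2
    _ = 2 * (2 * n + 1) * ((n + 1) * catalan n) := by rw [h3]
    _ = (n + 1) * (2 * (2 * n + 1) * catalan n) := by ring

lemma catalan_cast_pos (n : ℕ) : (0 : ℝ) < catalan n := by
  exact_mod_cast catalan_pos' n

lemma ratio_def (n : ℕ) :
    (catalan n : ℝ) / catalan (n + 1) = ((n : ℝ) + 2) / (2 * (2 * n + 1)) := by
  have h := catalan_rec n
  have h' : ((n : ℝ) + 2) * catalan (n + 1) = 2 * (2 * n + 1) * catalan n := by
    exact_mod_cast h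
  rw [div_eq_div_iff (catalan_cast_pos (n + 1)).ne' (by positivity)]
  linarith [h']

lemma ratio_ge (n : ℕ) : (1 : ℝ) / 4 ≤ (catalan n : ℝ) / catalan (n + 1) := by
  rw [ratio_def]
  rw [div_le_div_iff₀ (by norm_num) (by positivity)]
  have : (0 : ℝ) ≤ n := Nat.cast_nonneg n
  nlinarith

lemma catalan_mono : Monotone catalan := by
  apply monotone_nat_of_le_succ
  intro n
  have h := catalan_rec n
  by_contra hlt
  push_neg at hlt
  nlinarith [catalan_pos' n, catalan_pos' (n + 1)]

lemma ratio_tendsto : Tendsto (fun n => (catalan n : ℝ) / catalan (n + 1)) atTop (nhds (1 / 4)) := by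
  have hreal : Tendsto (fun x : ℝ => (x + 2) / (2 * (2 * x + 1))) atTop (nhds (1 / 4)) := by
    have h1 : Tendsto (fun x : ℝ => (1 + 2 * x⁻¹) / (4 + 2 * x⁻¹)) atTop (nhds (1 / 4)) := by
      have hinv : Tendsto (fun x : ℝ => x⁻¹) atTop (nhds 0) := tendsto_inv_atTop_zero
      have hnum : Tendsto (fun x : ℝ => 1 + 2 * x⁻¹) atTop (nhds 1) := by
        have := hinv.const_mul (2 : ℝ)
        simpa using (tendsto_const_nhds (x := (1:ℝ))).add this
      have hden : Tendsto (fun x : ℝ => 4 + 2 * x⁻¹) atTop (nhds 4) := by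
        have := hinv.const_mul (2 : ℝ)
        simpa using (tendsto_const_nhds (x := (4:ℝ))).add this
      simpa [Pi.div_def] using hnum.div hden (by norm_num)
    apply h1.congr'
    filter_upwards [eventually_gt_atTop (0 : ℝ)] with x hx
    rw [div_eq_div_iff (by positivity) (by positivity)]
    field_simp
    ring
  have := hreal.comp (tendsto_natCast_atTop_atTop (R := ℝ))
  apply this.congr
  intro n
  simp [Function.comp, ratio_def n]

lemma prod_ratio (m d : ℕ) :
    (catalan m : ℝ) / catalan (m + d) =
      ∏ i ∈ range d, ((catalan (m + i) : ℝ) / catalan (m + i + 1)) := by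
  induction d with
  | zero => simp [div_self (catalan_cast_pos m).ne']
  | succ d ih =>
    rw [prod_range_succ, ← ih, div_mul_div_cancel₀ (catalan_cast_pos (m + d)).ne']
    norm_num [Nat.add_assoc]


lemma le_of_ratio {b : ℕ → ℝ} (hpos : ∀ k, 0 < b k) {q : ℝ} (hq0 : 0 ≤ q)
    (hge : ∀ k, q ≤ b k / b (k + 1)) :
    ∀ d j, q ^ d * b (j + d) ≤ b j := by
  intro d
  induction d with
  | zero => intro j; simp
  | succ d ih =>
    intro j
    have h1 : q * b (j + 1) ≤ b j := by
      have := (le_div_iff₀ (hpos (j + 1))).mp (hge j)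
      linarith
    have h2 : q ^ d * b ((j + 1) + d) ≤ b (j + 1) := ih (j + 1)
    have hidx : j + (d + 1) = (j + 1) + d := by omega
    calc q ^ (d + 1) * b (j + (d + 1)) = q * (q ^ d * b ((j + 1) + d)) := by
          rw [hidx]; ring
      _ ≤ q * b (j + 1) := by
          apply mul_le_mul_of_nonneg_left h2 hq0
      _ ≤ b j := h1

lemma ge_of_ratio {b : ℕ → ℝ} (hpos : ∀ k, 0 < b k) {c : ℝ} (hc0 : 0 ≤ c) {K : ℕ}
    (hle : ∀ m, K ≤ m → b m / b (m + 1) ≤ c) :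
    ∀ d j, K ≤ j → b j ≤ c ^ d * b (j + d) := by
  intro d
  induction d with
  | zero => intro j _; simp
  | succ d ih =>
    intro j hj
    have h1 : b j ≤ c * b (j + 1) := by
      have := (div_le_iff₀ (hpos (j + 1))).mp (hle j hj)
      linarith
    have h2 : b (j + 1) ≤ c ^ d * b ((j + 1) + d) := ih (j + 1) (by omega)
    have hidx : j + (d + 1) = (j + 1) + d := by omega
    calc b j ≤ c * b (j + 1) := h1
      _ ≤ c * (c ^ d * b ((j + 1) + d)) := mul_le_mul_of_nonneg_left h2 hc0
      _ = c ^ (d + 1) * b (j + (d + 1)) := by rw [hidx]; ring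

lemma sum_div_tendsto {b : ℕ → ℝ} (hpos : ∀ k, 0 < b k) (hmono : Monotone b) {q : ℝ}
    (hq0 : 0 < q) (hq1 : q < 1) (hge : ∀ k, q ≤ b k / b (k + 1))
    (hlim : Tendsto (fun k => b k / b (k + 1)) atTop (nhds q)) :
    Tendsto (fun k => (∑ j ∈ range (k + 1), b j) / b k) atTop (nhds (1 / (1 - q))) := by
  have hq1' : 0 < 1 - q := by linarith
  rw [tendsto_order]
  constructor
  · -- lower bound side
    intro a ha
    have hlow : ∀ k, (∑ i ∈ range (k + 1), q ^ i) ≤ (∑ j ∈ range (k + 1), b j) / b k := by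
      intro k
      rw [le_div_iff₀ (hpos k), sum_mul]
      calc ∑ i ∈ range (k + 1), q ^ i * b k
          = ∑ j ∈ range (k + 1), q ^ (k + 1 - 1 - j) * b k := (sum_range_reflect (fun i => q ^ i * b k) (k + 1)).symm
        _ ≤ ∑ j ∈ range (k + 1), b j := by
            apply sum_le_sum
            intro j hj
            rw [mem_range] at hj
            have h := le_of_ratio hpos hq0.le hge (k - j) j
            have hidx : j + (k - j) = k := by omega
            rw [hidx] at h
            have : k + 1 - 1 - j = k - j := by omega
            rw [this]
            exact h
    have hgeo : Tendsto (fun k => ∑ i ∈ range (k + 1), q ^ i) atTop (nhds (1 / (1 - q))) := by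
      have h := (hasSum_geometric_of_lt_one hq0.le hq1).tendsto_sum_nat
      rw [one_div]
      exact h.comp (tendsto_add_atTop_nat 1)
    filter_upwards [hgeo.eventually (lt_mem_nhds ha)] with k hk
    exact lt_of_lt_of_le hk (hlow k)
  · -- upper bound side
    intro a ha
    -- choose c with q < c < 1 and 1/(1-c) < a
    have hcont : Tendsto (fun x : ℝ => 1 / (1 - x)) (nhds q) (nhds (1 / (1 - q))) := by
      apply ContinuousAt.tendsto
      apply ContinuousAt.div continuousAt_const (by fun_prop)
      simpa using hq1'.ne'
    have hev : ∀ᶠ x in nhds q, 1 / (1 - x) < a ∧ x < 1 :=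
      (hcont.eventually (gt_mem_nhds ha)).and (gt_mem_nhds hq1)
    obtain ⟨ε, hε, hball⟩ := Metric.eventually_nhds_iff.mp hev
    set c : ℝ := q + ε / 2 with hc_def
    have hqc : q < c := by simp [hc_def]; linarith
    have hcmem := hball (y := c) (by simp [hc_def, Real.dist_eq]; rw [abs_of_pos (by linarith)]; linarith)
    have hca : 1 / (1 - c) < a := hcmem.1
    have hc1 : c < 1 := hcmem.2
    have hc0 : 0 < c := lt_trans hq0 hqc
    have hc1' : 0 < 1 - c := by linarith
    obtain ⟨K, hK⟩ := eventually_atTop.mp (hlim.eventually (gt_mem_nhds hqc))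
    have hub : ∀ k, K ≤ k → (∑ j ∈ range (k + 1), b j) / b k ≤ 1 / (1 - c) + K * c ^ (k - K) := by
      intro k hk
      rw [div_le_iff₀ (hpos k)]
      have hbKk : b K ≤ c ^ (k - K) * b k := by
        have h := ge_of_ratio hpos hc0.le (fun m hm => (hK m hm).le) (k - K) K le_rfl
        have hidx : K + (k - K) = k := by omega
        rwa [hidx] at h
      have hsplit : ∑ j ∈ range (k + 1), b j =
          (∑ j ∈ Ico 0 K, b j) + ∑ j ∈ Ico K (k + 1), b j := by
        rw [Finset.sum_Ico_consecutive _ (Nat.zero_le K) (by omega), range_eq_Ico]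
      have hpart1 : ∑ j ∈ Ico 0 K, b j ≤ K * (c ^ (k - K) * b k) := by
        calc ∑ j ∈ Ico 0 K, b j ≤ ∑ _j ∈ Ico 0 K, (c ^ (k - K) * b k) := by
              apply sum_le_sum
              intro j hj
              rw [mem_Ico] at hj
              exact le_trans (hmono hj.2.le) hbKk
          _ = K * (c ^ (k - K) * b k) := by
              rw [sum_const, Nat.card_Ico, Nat.sub_zero, nsmul_eq_mul]
      have hpart2 : ∑ j ∈ Ico K (k + 1), b j ≤ (1 / (1 - c)) * b k := by
        have step1 : ∑ j ∈ Ico K (k + 1), b j ≤ ∑ j ∈ Ico K (k + 1), c ^ (k - j) * b k := by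
          apply sum_le_sum
          intro j hj
          rw [mem_Ico] at hj
          have h := ge_of_ratio hpos hc0.le (fun m hm => (hK m hm).le) (k - j) j hj.1
          have hidx : j + (k - j) = k := by omega
          rwa [hidx] at h
        have step2 : ∑ j ∈ Ico K (k + 1), c ^ (k - j) * b k =
            (∑ i ∈ range (k + 1 - K), c ^ i) * b k := by
          rw [Finset.sum_Ico_eq_sum_range]
          rw [sum_mul]
          rw [← sum_range_reflect (fun i => c ^ i * b k) (k + 1 - K)]
          apply sum_congr rfl
          intro i hi
          rw [mem_range] at hi
          have he : k - (K + i) = k + 1 - K - 1 - i := by omega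
          rw [he]
        have step3 : (∑ i ∈ range (k + 1 - K), c ^ i) ≤ 1 / (1 - c) := by
          have hsum := (summable_geometric_of_lt_one hc0.le hc1).sum_le_tsum (range (k + 1 - K))
            (fun i _ => pow_nonneg hc0.le i)
          rw [tsum_geometric_of_lt_one hc0.le hc1] at hsum
          rw [one_div]
          exact hsum
        calc ∑ j ∈ Ico K (k + 1), b j ≤ (∑ i ∈ range (k + 1 - K), c ^ i) * b k :=
              step1.trans (le_of_eq step2)
          _ ≤ (1 / (1 - c)) * b k := by
              apply mul_le_mul_of_nonneg_right step3 (hpos k).le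
      calc ∑ j ∈ range (k + 1), b j ≤ K * (c ^ (k - K) * b k) + (1 / (1 - c)) * b k := by
            rw [hsplit]; linarith
        _ = (1 / (1 - c) + K * c ^ (k - K)) * b k := by ring
    have htendK : Tendsto (fun k => 1 / (1 - c) + K * c ^ (k - K)) atTop (nhds (1 / (1 - c))) := by
      have h1 : Tendsto (fun k : ℕ => c ^ (k - K)) atTop (nhds 0) :=
        (tendsto_pow_atTop_nhds_zero_of_lt_one hc0.le hc1).comp (tendsto_sub_atTop_nat K)
      have h2 := h1.const_mul (K : ℝ)
      have := tendsto_const_nhds (x := 1 / (1 - c)) (f := atTop (α := ℕ))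
      simpa using this.add h2
    filter_upwards [htendK.eventually (gt_mem_nhds hca), eventually_ge_atTop K] with k h1 h2
    exact lt_of_le_of_lt (hub k h2) h1


lemma tendsto_aux_index (p i c : ℕ) (hp : 0 < p) :
    Tendsto (fun k : ℕ => p * (k + c) - 1 + i) atTop atTop := by
  apply tendsto_atTop_mono (f := fun k : ℕ => k - 1)
  · intro k
    have h1 : k + c ≤ p * (k + c) := Nat.le_mul_of_pos_left _ hp
    omega
  · exact tendsto_sub_atTop_nat 1

lemma prod_ratio_tendsto (p c d : ℕ) (hp : 0 < p) :
    Tendsto (fun k : ℕ => ∏ i ∈ range d,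
        ((catalan (p * (k + c) - 1 + i) : ℝ) / catalan (p * (k + c) - 1 + i + 1)))
      atTop (nhds ((1 / 4 : ℝ) ^ d)) := by
  have h : ((1 / 4 : ℝ) ^ d) = ∏ _i ∈ range d, (1 / 4 : ℝ) := by
    rw [prod_const, card_range]
  rw [h]
  apply tendsto_finset_prod
  intro i _
  exact ratio_tendsto.comp (tendsto_aux_index p i c hp)

lemma b_seq_tendsto {p : ℕ} (hp : 0 < p) :
    Tendsto (fun k => (∑ j ∈ range (k + 1), (catalan (p * (j + 1) - 1) : ℝ)) /
        (catalan (p * (k + 1) - 1) : ℝ)) atTop (nhds (1 / (1 - (1 / 4 : ℝ) ^ p))) := by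
  set b : ℕ → ℝ := fun j => (catalan (p * (j + 1) - 1) : ℝ) with hb
  have hpos : ∀ k, 0 < b k := fun k => catalan_cast_pos _
  have hidx : ∀ j : ℕ, p * (j + 1) - 1 + p = p * (j + 1 + 1) - 1 := by
    intro j
    have h1 : 0 < p * (j + 1) := by positivity
    have h2 : p * (j + 1 + 1) = p * (j + 1) + p := by ring
    omega
  have hratio : ∀ j, b j / b (j + 1) =
      ∏ i ∈ range p, ((catalan (p * (j + 1) - 1 + i) : ℝ) / catalan (p * (j + 1) - 1 + i + 1)) := by
    intro j
    rw [hb]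
    simp only
    rw [← hidx j, ← prod_ratio]
  have hmono : Monotone b := by
    apply monotone_nat_of_le_succ
    intro j
    have h : p * (j + 1) - 1 ≤ p * (j + 1 + 1) - 1 := by
      have := Nat.mul_le_mul_left p (show j + 1 ≤ j + 1 + 1 by omega)
      omega
    have h2 := catalan_mono h
    simp only [hb]
    exact_mod_cast h2
  have hq0 : (0 : ℝ) < (1 / 4 : ℝ) ^ p := by positivity
  have hq1 : ((1 / 4 : ℝ)) ^ p < 1 := by
    apply pow_lt_one₀ (by norm_num) (by norm_num) (by omega)
  have hge : ∀ j, (1 / 4 : ℝ) ^ p ≤ b j / b (j + 1) := by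
    intro j
    rw [hratio j]
    have h : ((1 / 4 : ℝ) ^ p) = ∏ _i ∈ range p, (1 / 4 : ℝ) := by
      rw [prod_const, card_range]
    rw [h]
    apply Finset.prod_le_prod
    · intro i _; norm_num
    · intro i _; exact ratio_ge _
  have hlim : Tendsto (fun j => b j / b (j + 1)) atTop (nhds ((1 / 4 : ℝ) ^ p)) := by
    apply (prod_ratio_tendsto p 1 p hp).congr
    intro j
    exact (hratio j).symm
  exact sum_div_tendsto hpos hmono hq0 hq1 hge hlim

lemma a_seq_tendsto :
    Tendsto (fun n => (∑ j ∈ range (n + 1), (catalan j : ℝ)) / (catalan n : ℝ))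
      atTop (nhds (1 / (1 - (1 / 4 : ℝ)))) := by
  apply sum_div_tendsto (fun k => catalan_cast_pos k)
    (fun m n h => by exact_mod_cast catalan_mono h) (by norm_num) (by norm_num) ratio_ge
  exact ratio_tendsto

end Stmt13Aux

open Stmt13Aux Finset in
theorem stmt_13 (p r : ℕ) (hp : 0 < p) (hr : r < p) :
    Tendsto (fun k =>
        (cntLe {x : FreeMagma Unit | p ∣ x.len} (p * k + r) : ℝ) /
          (cntLe (Set.univ : Set (FreeMagma Unit)) (p * k + r) : ℝ))
      atTop (nhds (3 / (4 ^ (r + 1) * (1 - 1 / 4 ^ p)))) := by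
  have hG1 : Tendsto (fun k => (∑ j ∈ range k, (catalan (p * (j + 1) - 1) : ℝ)) /
      (catalan (p * k - 1) : ℝ)) atTop (nhds (1 / (1 - (1 / 4 : ℝ) ^ p))) := by
    have h := (b_seq_tendsto hp).comp (tendsto_sub_atTop_nat 1)
    apply h.congr'
    filter_upwards [eventually_ge_atTop 1] with k hk
    have hk1 : k - 1 + 1 = k := by omega
    simp only [Function.comp]
    rw [hk1]
  have hG2 : Tendsto (fun k => (catalan (p * k - 1) : ℝ) / (catalan (p * k + r - 1) : ℝ))
      atTop (nhds ((1 / 4 : ℝ) ^ r)) := by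
    have h := prod_ratio_tendsto p 0 r hp
    apply h.congr'
    filter_upwards [eventually_ge_atTop 1] with k hk
    have hpk : 1 ≤ p * k := Nat.one_le_iff_ne_zero.mpr (by positivity)
    have h1 : p * (k + 0) = p * k := by rw [Nat.add_zero]
    have h2 : p * k - 1 + r = p * k + r - 1 := by omega
    rw [← prod_ratio (p * (k + 0) - 1) r, h1, h2]
  have hG3 : Tendsto (fun k => (catalan (p * k + r - 1) : ℝ) /
      (∑ m ∈ range (p * k + r), (catalan m : ℝ))) atTop (nhds (3 / 4)) := by
    have h43 : (1 : ℝ) / (1 - 1 / 4) = 4 / 3 := by norm_num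
    have h := a_seq_tendsto
    rw [h43] at h
    have hcomp : Tendsto (fun k : ℕ => p * k + r - 1) atTop atTop := by
      apply tendsto_atTop_mono (f := fun k : ℕ => k - 1)
      · intro k
        have : k ≤ p * k := Nat.le_mul_of_pos_left k hp
        omega
      · exact tendsto_sub_atTop_nat 1
    have h2 := (h.comp hcomp).inv₀ (by norm_num)
    have h34 : ((4 : ℝ) / 3)⁻¹ = 3 / 4 := by norm_num
    rw [h34] at h2
    apply h2.congr'
    filter_upwards [eventually_ge_atTop 1] with k hk
    have hpk : 1 ≤ p * k := Nat.one_le_iff_ne_zero.mpr (by positivity)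
    have hidx : p * k + r - 1 + 1 = p * k + r := by omega
    simp only [Function.comp]
    rw [hidx, inv_div]
  have hmain := (hG1.mul hG2).mul hG3
  have h4p : (1 : ℝ) < 4 ^ p := by
    calc (1 : ℝ) < 4 ^ 1 := by norm_num
      _ ≤ 4 ^ p := by
        apply pow_le_pow_right₀ (by norm_num) (by omega)
  have hval : 1 / (1 - (1 / 4 : ℝ) ^ p) * (1 / 4 : ℝ) ^ r * (3 / 4) =
      3 / (4 ^ (r + 1) * (1 - 1 / 4 ^ p)) := by
    have hp4 : ((1 : ℝ) / 4) ^ p = 1 / 4 ^ p := by rw [div_pow, one_pow]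
    have hr4 : ((1 : ℝ) / 4) ^ r = 1 / 4 ^ r := by rw [div_pow, one_pow]
    have hne : (1 : ℝ) - 1 / 4 ^ p ≠ 0 := by
      have h5 : 1 / (4 : ℝ) ^ p < 1 := by
        rw [div_lt_one (by positivity)]
        exact h4p
      linarith
    rw [hp4, hr4, pow_succ]
    field_simp
  rw [hval] at hmain
  apply hmain.congr'
  filter_upwards [eventually_ge_atTop 1] with k hk
  have hpk : 1 ≤ p * k := Nat.one_le_iff_ne_zero.mpr (by positivity)
  rw [numer_eq hp hr k, denom_eq]
  push_cast
  rw [div_mul_div_cancel₀ (catalan_cast_pos _).ne', div_mul_div_cancel₀ (catalan_cast_pos _).ne']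
end
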